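/- arXiv:1712.01587 — 6 statements merged into one kernel-verified Lean document; each statement's English description precedes it below -/
import Mathlib

section
/- Fix an integer k ≥ 2 and let ζ = exp(2πi/k). Let D ≤ SL(3,ℂ) be the subgroup generated by diag(ζ,1,ζ⁻¹) and diag(1,ζ,ζ⁻¹). Let x, y, z ∈ ℂ all be nonzero. Then the D-orbit of [x:y:z] ∈ ℙ² has at least k elements, and if it has fewer than k² elements then 3 divides k. -/
open Matrix Complex

noncomputable section

abbrev M3 : Type := Matrix (Fin 3) (Fin 3) ℂ
abbrev SL3 : Type := Matrix.SpecialLinearGroup (Fin 3) ℂ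
abbrev P2 : Type := Projectivization ℂ (Fin 3 → ℂ)

/-- The matrix `M_τ`. -/
def Mtau : M3 := !![0,1,0; 0,0,1; 1,0,0]

/-- `ζ_n = exp(2πi/n)`. -/
def zeta (n : ℕ) : ℂ := Complex.exp (2 * Real.pi * Complex.I / n)

/-- The subgroup of `SL(3,ℂ)` generated by a given set of matrices. -/
def genSL (s : Set M3) : Subgroup SL3 :=
  Subgroup.closure { g : SL3 | (g : M3) ∈ s }

/-- The orbit of a point of `ℙ²` under a set of (invertible) matrices,
acting by `[v] ↦ [g·v]`. -/
def projOrbit (G : Set M3) (p : P2) : Set P2 :=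
  { q | ∃ g ∈ G, ∃ h : g.mulVec p.rep ≠ 0, Projectivization.mk ℂ (g.mulVec p.rep) h = q }

/-- The orbit of a point of `ℙ²` under a subgroup of `SL(3,ℂ)`. -/
def projOrbitSL (G : Subgroup SL3) (p : P2) : Set P2 :=
  projOrbit ((fun g : SL3 => (g : M3)) '' (G : Set SL3)) p

/-- The point `[x:y:z] ∈ ℙ²`. -/
def pt (x y z : ℂ) (h : ![x,y,z] ≠ 0) : P2 := Projectivization.mk ℂ ![x,y,z] h

lemma vne₀ {x y z : ℂ} (hx : x ≠ 0) : ![x,y,z] ≠ 0 := by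
  intro h; exact hx (by simpa using congrFun h 0)

lemma vne₁ {x y z : ℂ} (hy : y ≠ 0) : ![x,y,z] ≠ 0 := by
  intro h; exact hy (by simpa using congrFun h 1)

lemma vne₂ {x y z : ℂ} (hz : z ≠ 0) : ![x,y,z] ≠ 0 := by
  intro h; exact hz (by simpa using congrFun h 2)

/-- No three distinct points of `P` are collinear. -/
def NoThreeCollinear (P : Set P2) : Prop :=
  ∀ p q r, p ∈ P → q ∈ P → r ∈ P → p ≠ q → p ≠ r → q ≠ r →
    LinearIndependent ℂ ![p.rep, q.rep, r.rep]

/-- The points of `P` all lie on a conic. -/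
def LiesOnConic (P : Set P2) : Prop :=
  ∃ Q : QuadraticForm ℂ (Fin 3 → ℂ), Q ≠ 0 ∧ ∀ p ∈ P, Q p.rep = 0

lemma zeta_ne_zero (k : ℕ) : zeta k ≠ 0 := Complex.exp_ne_zero _

lemma zeta_zpow_eq {k : ℕ} (hk : k ≠ 0) (m n : ℤ) :
    zeta k ^ m = zeta k ^ n ↔ ((m : ZMod k) = (n : ZMod k)) := by
  have hprim : IsPrimitiveRoot (zeta k) k := Complex.isPrimitiveRoot_exp k hk
  rw [← sub_eq_zero (a := (m : ZMod k)), ← Int.cast_sub,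
    ZMod.intCast_zmod_eq_zero_iff_dvd, ← hprim.zpow_eq_one_iff_dvd,
    zpow_sub₀ (zeta_ne_zero k), div_eq_one_iff_eq (zpow_ne_zero _ (zeta_ne_zero k))]

def Asl (k : ℕ) : SL3 := ⟨Matrix.diagonal ![zeta k, 1, (zeta k)⁻¹], by
  simp [Matrix.det_diagonal, Fin.prod_univ_three, mul_inv_cancel₀ (zeta_ne_zero k)]⟩

def Bsl (k : ℕ) : SL3 := ⟨Matrix.diagonal ![1, zeta k, (zeta k)⁻¹], by
  simp [Matrix.det_diagonal, Fin.prod_univ_three, mul_inv_cancel₀ (zeta_ne_zero k)]⟩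

lemma coe_AB (k : ℕ) (a b : ℕ) :
    ((Asl k ^ a * Bsl k ^ b : SL3) : M3)
      = Matrix.diagonal ![zeta k ^ a, zeta k ^ b, (zeta k)⁻¹ ^ (a + b)] := by
  rw [Matrix.SpecialLinearGroup.coe_mul, Matrix.SpecialLinearGroup.coe_pow,
    Matrix.SpecialLinearGroup.coe_pow]
  show (Matrix.diagonal _) ^ a * (Matrix.diagonal _) ^ b = _
  rw [Matrix.diagonal_pow, Matrix.diagonal_pow, Matrix.diagonal_mul_diagonal]
  exact congrArg Matrix.diagonal (by funext i; fin_cases i <;> simp [Pi.pow_apply, Pi.mul_apply, pow_add])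

def vab (k : ℕ) (x y z : ℂ) (a b : ℕ) : Fin 3 → ℂ :=
  ![zeta k ^ a * x, zeta k ^ b * y, (zeta k)⁻¹ ^ (a + b) * z]

lemma vab_ne {k : ℕ} {x y z : ℂ} (hx : x ≠ 0) (a b : ℕ) : vab k x y z a b ≠ 0 :=
  vne₀ (mul_ne_zero (pow_ne_zero _ (zeta_ne_zero k)) hx)

lemma mulVec_eq (k : ℕ) {x y z : ℂ} (hx : x ≠ 0) (a b : ℕ) (u : ℂˣ)
    (w : Fin 3 → ℂ) (hw : (u : ℂ) • ![x,y,z] = w) :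
    ((Asl k ^ a * Bsl k ^ b : SL3) : M3).mulVec w = (u : ℂ) • vab k x y z a b := by
  rw [coe_AB]
  funext i
  rw [Matrix.mulVec_diagonal, ← hw]
  fin_cases i <;> simp [vab] <;> ring

lemma mem_orbit (k : ℕ) {x y z : ℂ} (hx : x ≠ 0) (a b : ℕ) :
    Projectivization.mk ℂ (vab k x y z a b) (vab_ne hx a b) ∈
      projOrbitSL (genSL {Matrix.diagonal ![zeta k, 1, (zeta k)⁻¹],
                     Matrix.diagonal ![1, zeta k, (zeta k)⁻¹]}) (pt x y z (vne₀ hx)) := by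
  set p : P2 := pt x y z (vne₀ hx) with hp
  have hmemA : Asl k ∈ genSL {Matrix.diagonal ![zeta k, 1, (zeta k)⁻¹],
      Matrix.diagonal ![1, zeta k, (zeta k)⁻¹]} :=
    Subgroup.subset_closure (Or.inl rfl)
  have hmemB : Bsl k ∈ genSL {Matrix.diagonal ![zeta k, 1, (zeta k)⁻¹],
      Matrix.diagonal ![1, zeta k, (zeta k)⁻¹]} :=
    Subgroup.subset_closure (Or.inr rfl)
  have hmem := mul_mem (pow_mem hmemA a) (pow_mem hmemB b)
  -- p.rep = u • ![x,y,z]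
  obtain ⟨u, hu⟩ := (Projectivization.mk_eq_mk_iff ℂ p.rep ![x,y,z] p.rep_nonzero
      (vne₀ hx)).mp (by rw [Projectivization.mk_rep]; rfl)
  have hw : (u : ℂ) • ![x,y,z] = p.rep := hu
  have he := mulVec_eq k hx a b u p.rep hw
  refine ⟨((Asl k ^ a * Bsl k ^ b : SL3) : M3), ⟨_, hmem, rfl⟩, ?_, ?_⟩
  · rw [he]; exact smul_ne_zero u.ne_zero (vab_ne hx a b)
  · refine (Projectivization.mk_eq_mk_iff ℂ _ _ _ (vab_ne hx a b)).mpr ⟨u, ?_⟩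
    rw [Units.smul_def, ← he]

lemma eq_cond {k : ℕ} (hk : k ≠ 0) {x y z : ℂ} (hx : x ≠ 0) (hy : y ≠ 0) (hz : z ≠ 0)
    {a b a' b' : ℕ}
    (h : Projectivization.mk ℂ (vab k x y z a b) (vab_ne hx a b)
       = Projectivization.mk ℂ (vab k x y z a' b') (vab_ne hx a' b')) :
    3 * ((a : ZMod k) - a') = 0 ∧ ((a : ZMod k) - a') = (b : ZMod k) - b' := by
  set ζ := zeta k with hζ
  have hζ0 : ζ ≠ 0 := zeta_ne_zero k
  obtain ⟨e, he⟩ := (Projectivization.mk_eq_mk_iff ℂ _ _ _ _).mp h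
  have h0 := congrFun he 0
  have h1 := congrFun he 1
  have h2 := congrFun he 2
  simp only [vab, Units.smul_def, Pi.smul_apply, smul_eq_mul, Matrix.cons_val_zero,
    Matrix.cons_val_one, Matrix.head_cons, Matrix.cons_val_two, Matrix.tail_cons] at h0 h1 h2
  replace h0 := mul_right_cancel₀ hx (by linear_combination h0 :
    (↑e * zeta k ^ a') * x = zeta k ^ a * x)
  replace h1 := mul_right_cancel₀ hy (by linear_combination h1 :
    (↑e * zeta k ^ b') * y = zeta k ^ b * y)
  replace h2 := mul_right_cancel₀ hz (by linear_combination h2 :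
    (↑e * (zeta k)⁻¹ ^ (a' + b')) * z = (zeta k)⁻¹ ^ (a + b) * z)
  have hinv : ∀ n : ℕ, ζ⁻¹ ^ n = ζ ^ (-(n:ℤ)) := fun n => by
    rw [inv_pow, ← zpow_natCast, ← _root_.zpow_neg]
  have hE : (e : ℂ) = ζ ^ ((a:ℤ) - a') := by
    rw [zpow_sub₀ hζ0, zpow_natCast, zpow_natCast, eq_div_iff (pow_ne_zero _ hζ0)]
    exact h0
  have E1 : ((a : ZMod k) - a' + b' = b) := by
    have : ζ ^ ((a:ℤ) - a' + b') = ζ ^ (b:ℤ) := by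
      rw [zpow_add₀ hζ0, ← hE, zpow_natCast, zpow_natCast]; exact h1
    have := (zeta_zpow_eq hk _ _).mp this
    push_cast at this; exact this
  have E2 : ((a : ZMod k) - a' - a' - b' = -(a + b)) := by
    have : ζ ^ ((a:ℤ) - a' + -((a':ℤ) + b')) = ζ ^ (-((a:ℤ) + b)) := by
      rw [zpow_add₀ hζ0, ← hE, ← Nat.cast_add, ← hinv, ← Nat.cast_add, ← hinv]; exact h2
    have := (zeta_zpow_eq hk _ _).mp this
    push_cast at this; linear_combination this
  constructor
  · linear_combination E1 + E2
  · linear_combination E1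

/-- For `k ≥ 2`, `ζ = exp(2πi/k)` and `D ≤ SL(3,ℂ)` generated by
`diag(ζ,1,ζ⁻¹)` and `diag(1,ζ,ζ⁻¹)`, and `x, y, z` all nonzero, the `D`-orbit of
`[x:y:z]` has at least `k` elements, and if it has fewer than `k²` elements then `3 ∣ k`. -/
theorem statement2 (k : ℕ) (hk : 2 ≤ k) (x y z : ℂ) (hx : x ≠ 0) (hy : y ≠ 0) (hz : z ≠ 0)
    (D : Subgroup SL3)
    (hD : D = genSL {Matrix.diagonal ![zeta k, 1, (zeta k)⁻¹],
                     Matrix.diagonal ![1, zeta k, (zeta k)⁻¹]}) :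
    (k : ℕ∞) ≤ (projOrbitSL D (pt x y z (vne₀ hx))).encard ∧
    ((projOrbitSL D (pt x y z (vne₀ hx))).encard < ((k ^ 2 : ℕ) : ℕ∞) → 3 ∣ k) := by
  subst hD
  have hk0 : k ≠ 0 := by omega
  haveI : NeZero k := ⟨hk0⟩
  set S := projOrbitSL (genSL {Matrix.diagonal ![zeta k, 1, (zeta k)⁻¹],
      Matrix.diagonal ![1, zeta k, (zeta k)⁻¹]}) (pt x y z (vne₀ hx)) with hS
  have hvalcast : ∀ a : ZMod k, ((a.val : ℕ) : ZMod k) = a := fun a => by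
    simp [ZMod.natCast_val, ZMod.cast_id]
  constructor
  · set f : ZMod k → P2 :=
      fun a => Projectivization.mk ℂ (vab k x y z a.val 0) (vab_ne hx a.val 0) with hf
    have hmaps : Set.MapsTo f Set.univ S := fun a _ => mem_orbit k hx a.val 0
    have hinj : Set.InjOn f Set.univ := by
      intro a _ a' _ hff
      obtain ⟨hA, hB⟩ := eq_cond hk0 hx hy hz hff
      rw [Nat.cast_zero, sub_zero] at hB
      have : (a.val : ZMod k) - (a'.val : ZMod k) = 0 := by rw [hB]
      rw [sub_eq_zero, hvalcast, hvalcast] at this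
      exact this
    calc (k : ℕ∞) = (Set.univ : Set (ZMod k)).encard := by
          rw [Set.encard_univ, ENat.card_eq_coe_fintype_card, ZMod.card]
      _ ≤ S.encard := Set.encard_le_encard_of_injOn hmaps hinj
  · intro hlt
    by_contra h3
    refine absurd hlt (not_lt.mpr ?_)
    have hcop : Nat.Coprime 3 k := (Nat.Prime.coprime_iff_not_dvd Nat.prime_three).mpr h3
    have hu3 : IsUnit ((3 : ℕ) : ZMod k) := (ZMod.isUnit_iff_coprime 3 k).mpr hcop
    set F : ZMod k × ZMod k → P2 :=
      fun ab => Projectivization.mk ℂ (vab k x y z ab.1.val ab.2.val)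
        (vab_ne hx ab.1.val ab.2.val) with hF
    have hmaps : Set.MapsTo F Set.univ S := fun ab _ => mem_orbit k hx ab.1.val ab.2.val
    have hinj : Set.InjOn F Set.univ := by
      intro ab _ ab' _ hff
      obtain ⟨hA, hB⟩ := eq_cond hk0 hx hy hz hff
      have hε : (ab.1.val : ZMod k) - (ab'.1.val : ZMod k) = 0 := by
        exact hu3.mul_right_eq_zero.mp (show ((3:ℕ):ZMod k) *
          ((ab.1.val : ZMod k) - (ab'.1.val : ZMod k)) = 0 by push_cast; linear_combination hA)
      have hδ : (ab.2.val : ZMod k) - (ab'.2.val : ZMod k) = 0 := by rw [← hB, hε]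
      rw [sub_eq_zero, hvalcast, hvalcast] at hε hδ
      exact Prod.ext hε hδ
    calc ((k ^ 2 : ℕ) : ℕ∞) = (Set.univ : Set (ZMod k × ZMod k)).encard := by
          rw [Set.encard_univ, ENat.card_eq_coe_fintype_card, Fintype.card_prod, ZMod.card]
          norm_cast
          ring
      _ ≤ S.encard := Set.encard_le_encard_of_injOn hmaps hinj
end
end

section
/- Fix an integer k ≥ 2 and let ζ = exp(2πi/k). Let D ≤ SL(3,ℂ) be the subgroup generated by diag(ζ,1,ζ⁻¹) and diag(1,ζ,ζ⁻¹). Let x, y, z ∈ ℂ all be nonzero, and suppose the D-orbit of [x:y:z] ∈ ℙ² has fewer than k² elements and at most 8 elements. Then k = 3 and the orbit has exactly 3 elements. -/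
open Matrix Complex

noncomputable section

namespace Stmt3

variable {k : ℕ}

def E (k : ℕ) (a : ZMod k) : ℂ := zeta k ^ a.val

lemma zeta_ne_zero (k : ℕ) : zeta k ≠ 0 := Complex.exp_ne_zero _

lemma E_ne_zero (k : ℕ) (a : ZMod k) : E k a ≠ 0 := pow_ne_zero _ (zeta_ne_zero k)

lemma prim (hk : k ≠ 0) : IsPrimitiveRoot (zeta k) k := Complex.isPrimitiveRoot_exp k hk

lemma zeta_pow_k (hk : k ≠ 0) : zeta k ^ k = 1 := (prim hk).pow_eq_one

lemma zeta_pow_mod (hk : k ≠ 0) (n : ℕ) : zeta k ^ n = zeta k ^ (n % k) := by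
  conv_lhs => rw [← Nat.mod_add_div n k]
  rw [pow_add, pow_mul, zeta_pow_k hk, one_pow, mul_one]

lemma E_natCast (hk : k ≠ 0) (n : ℕ) : E k (n : ZMod k) = zeta k ^ n := by
  have : NeZero k := ⟨hk⟩
  rw [E, ZMod.val_natCast, ← zeta_pow_mod hk]

lemma E_add (hk : k ≠ 0) (a b : ZMod k) : E k (a + b) = E k a * E k b := by
  have : NeZero k := ⟨hk⟩
  rw [E, E, E, ZMod.val_add, ← zeta_pow_mod hk, pow_add]

lemma E_zero (hk : k ≠ 0) : E k 0 = 1 := by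
  have : NeZero k := ⟨hk⟩
  simp [E]

lemma E_one (hk : 2 ≤ k) : E k 1 = zeta k := by
  have : Fact (1 < k) := ⟨hk⟩
  rw [E, ZMod.val_one, pow_one]

lemma E_inj (hk : k ≠ 0) {a b : ZMod k} (h : E k a = E k b) : a = b := by
  have : NeZero k := ⟨hk⟩
  exact ZMod.val_injective k ((prim hk).pow_inj a.val_lt b.val_lt h)

lemma smul3 (hk : k ≠ 0) (t : ZMod k) : 3 • t = 0 ↔ k ∣ 3 * t.val := by
  have : NeZero k := ⟨hk⟩
  rw [← ZMod.natCast_eq_zero_iff]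
  constructor
  · intro h
    rw [← h, nsmul_eq_mul]
    push_cast
    rw [ZMod.natCast_rightInverse t]
  · intro h
    rw [nsmul_eq_mul, ← ZMod.natCast_rightInverse t]
    exact_mod_cast h

lemma E_pow_three (hk : k ≠ 0) {t : ZMod k} (h : 3 • t = 0) : E k t ^ 3 = 1 := by
  rw [E, ← pow_mul]
  exact ((prim hk).pow_eq_one_iff_dvd _).mpr (by rw [mul_comm]; exact (smul3 hk t).mp h)


def dvec (k : ℕ) (a b : ZMod k) : Fin 3 → ℂ := ![E k a, E k b, (E k a * E k b)⁻¹]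

def dmat (k : ℕ) (a b : ZMod k) : M3 := Matrix.diagonal (dvec k a b)

lemma det_dmat (k : ℕ) (a b : ZMod k) : (dmat k a b).det = 1 := by
  rw [dmat, Matrix.det_diagonal, Fin.prod_univ_three]
  simp only [dvec, Matrix.cons_val_zero, Matrix.cons_val_one, Matrix.head_cons,
    Matrix.cons_val_two, Matrix.tail_cons]
  field_simp
  exact div_self (mul_ne_zero (E_ne_zero k a) (E_ne_zero k b))

def dsl (k : ℕ) (a b : ZMod k) : SL3 := ⟨dmat k a b, det_dmat k a b⟩

lemma dmat_mul (hk : k ≠ 0) (a b a' b' : ZMod k) :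
    dmat k a b * dmat k a' b' = dmat k (a + a') (b + b') := by
  have hv : (dvec k a b) * (dvec k a' b') = dvec k (a + a') (b + b') := by
    funext i
    fin_cases i <;> simp [dvec, E_add hk, mul_inv] <;> ring
  rw [dmat, dmat, dmat, Matrix.diagonal_mul_diagonal]
  exact congrArg Matrix.diagonal hv

lemma dmat_zero (hk : k ≠ 0) : dmat k 0 0 = 1 := by
  have hv : dvec k 0 0 = 1 := by
    funext i
    fin_cases i <;> simp [dvec, E_zero hk]
  rw [dmat, hv]
  exact Matrix.diagonal_one

def phiv (x y z : ℂ) (k : ℕ) (a b : ZMod k) : Fin 3 → ℂ :=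
  ![E k a * x, E k b * y, (E k a * E k b)⁻¹ * z]

lemma phiv_ne {x : ℂ} (hx : x ≠ 0) (y z : ℂ) (k : ℕ) (a b : ZMod k) :
    phiv x y z k a b ≠ 0 := vne₀ (mul_ne_zero (E_ne_zero k a) hx)

def phi (x y z : ℂ) (hx : x ≠ 0) (k : ℕ) (a b : ZMod k) : P2 :=
  Projectivization.mk ℂ (phiv x y z k a b) (phiv_ne hx y z k a b)

lemma mulVec_eq (x y z : ℂ) (k : ℕ) (a b : ZMod k) (c : ℂ) :
    (dmat k a b).mulVec (c • ![x,y,z]) = c • phiv x y z k a b := by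
  funext i
  fin_cases i <;>
    simp [dmat, Matrix.mulVec_diagonal, dvec, phiv] <;> ring

lemma mk_eq {x y z : ℂ} (hx : x ≠ 0) (k : ℕ) (a b : ZMod k) (c : ℂˣ) {v : Fin 3 → ℂ}
    (hv : v = (c : ℂ) • ![x,y,z]) {m : M3} (hm : m = dmat k a b) (hne : m.mulVec v ≠ 0) :
    Projectivization.mk ℂ (m.mulVec v) hne = phi x y z hx k a b := by
  subst hm hv
  rw [phi, Projectivization.mk_eq_mk_iff]
  exact ⟨c, by rw [Units.smul_def, ← mulVec_eq]⟩

def genSet (k : ℕ) : Set M3 :=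
  {Matrix.diagonal ![zeta k, 1, (zeta k)⁻¹], Matrix.diagonal ![1, zeta k, (zeta k)⁻¹]}

lemma dmat_one_zero (hk : 2 ≤ k) : dmat k 1 0 = Matrix.diagonal ![zeta k, 1, (zeta k)⁻¹] := by
  have hk0 : k ≠ 0 := by omega
  have hv : dvec k 1 0 = ![zeta k, 1, (zeta k)⁻¹] := by
    funext i
    fin_cases i <;> simp [dvec, E_one hk, E_zero hk0]
  rw [dmat, hv]

lemma dmat_zero_one (hk : 2 ≤ k) : dmat k 0 1 = Matrix.diagonal ![1, zeta k, (zeta k)⁻¹] := by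
  have hk0 : k ≠ 0 := by omega
  have hv : dvec k 0 1 = ![1, zeta k, (zeta k)⁻¹] := by
    funext i
    fin_cases i <;> simp [dvec, E_one hk, E_zero hk0]
  rw [dmat, hv]

/-- Every element of the generated subgroup is of the form `dmat k a b`. -/
lemma mem_form (hk : 2 ≤ k) {g : SL3}
    (hg : g ∈ Subgroup.closure { h : SL3 | (h : M3) ∈ genSet k }) :
    ∃ a b : ZMod k, (g : M3) = dmat k a b := by
  have hk0 : k ≠ 0 := by omega
  induction hg using Subgroup.closure_induction with
  | mem g hgmem =>
    rcases hgmem with h | h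
    · exact ⟨1, 0, by rw [h, dmat_one_zero hk]⟩
    · exact ⟨0, 1, by rw [h, dmat_zero_one hk]⟩
  | one => exact ⟨0, 0, by rw [Matrix.SpecialLinearGroup.coe_one, dmat_zero hk0]⟩
  | mul g h _ _ ihg ihh =>
    obtain ⟨a, b, hab⟩ := ihg
    obtain ⟨a', b', hab'⟩ := ihh
    exact ⟨a + a', b + b', by rw [Matrix.SpecialLinearGroup.coe_mul, hab, hab', dmat_mul hk0]⟩
  | inv g _ ih =>
    obtain ⟨a, b, hab⟩ := ih
    refine ⟨-a, -b, ?_⟩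
    have h1 : (dmat k a b) * (g⁻¹ : SL3) = 1 := by
      rw [← hab, ← Matrix.SpecialLinearGroup.coe_mul, mul_inv_cancel,
        Matrix.SpecialLinearGroup.coe_one]
    calc ((g⁻¹ : SL3) : M3) = 1 * ((g⁻¹ : SL3) : M3) := (one_mul _).symm
      _ = (dmat k (-a) (-b) * dmat k a b) * ((g⁻¹ : SL3) : M3) := by
          rw [dmat_mul hk0, neg_add_cancel, neg_add_cancel, dmat_zero hk0]
      _ = dmat k (-a) (-b) * ((dmat k a b) * ((g⁻¹ : SL3) : M3)) := by rw [mul_assoc]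
      _ = dmat k (-a) (-b) := by rw [h1, mul_one]

/-- Conversely, `dsl k a b` lies in the generated subgroup. -/
lemma dsl_mem (hk : 2 ≤ k) (a b : ZMod k) :
    dsl k a b ∈ Subgroup.closure { h : SL3 | (h : M3) ∈ genSet k } := by
  have hk0 : k ≠ 0 := by omega
  have h1 : dsl k 1 0 ∈ Subgroup.closure { h : SL3 | (h : M3) ∈ genSet k } :=
    Subgroup.subset_closure (by left; exact dmat_one_zero hk)
  have h2 : dsl k 0 1 ∈ Subgroup.closure { h : SL3 | (h : M3) ∈ genSet k } :=
    Subgroup.subset_closure (by right; exact dmat_zero_one hk)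
  have : NeZero k := ⟨hk0⟩
  have key : dsl k a b = dsl k 1 0 ^ a.val * dsl k 0 1 ^ b.val := by
    apply Subtype.ext
    rw [Matrix.SpecialLinearGroup.coe_mul, Matrix.SpecialLinearGroup.coe_pow,
      Matrix.SpecialLinearGroup.coe_pow]
    show dmat k a b = dmat k 1 0 ^ a.val * dmat k 0 1 ^ b.val
    have p1 : dmat k 1 0 ^ a.val = dmat k (a.val • (1 : ZMod k)) (a.val • (0 : ZMod k)) := by
      induction a.val with
      | zero => simp [dmat_zero hk0]
      | succ n ih => rw [pow_succ, ih, dmat_mul hk0, succ_nsmul, succ_nsmul]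
    have p2 : dmat k 0 1 ^ b.val = dmat k (b.val • (0 : ZMod k)) (b.val • (1 : ZMod k)) := by
      induction b.val with
      | zero => simp [dmat_zero hk0]
      | succ n ih => rw [pow_succ, ih, dmat_mul hk0, succ_nsmul, succ_nsmul]
    have ea : a.val • (1 : ZMod k) + b.val • (0 : ZMod k) = a := by
      rw [smul_zero, add_zero, nsmul_eq_mul, mul_one, ZMod.natCast_rightInverse a]
    have eb : a.val • (0 : ZMod k) + b.val • (1 : ZMod k) = b := by
      rw [smul_zero, zero_add, nsmul_eq_mul, mul_one, ZMod.natCast_rightInverse b]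
    rw [p1, p2, dmat_mul hk0, ea, eb]
  rw [key]
  exact mul_mem (pow_mem h1 _) (pow_mem h2 _)

lemma smul_phiv (hk : k ≠ 0) {t : ZMod k} (ht : 3 • t = 0) (x y z : ℂ) (a' b' : ZMod k) :
    E k t • phiv x y z k a' b' = phiv x y z k (a' + t) (b' + t) := by
  have h3t := E_pow_three hk ht
  have ha := E_ne_zero k a'
  have hb := E_ne_zero k b'
  have htne := E_ne_zero k t
  funext i
  fin_cases i
  · show E k t * (E k a' * x) = E k (a' + t) * x
    rw [E_add hk]; ring
  · show E k t * (E k b' * y) = E k (b' + t) * y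
    rw [E_add hk]; ring
  · show E k t * ((E k a' * E k b')⁻¹ * z) = (E k (a' + t) * E k (b' + t))⁻¹ * z
    rw [E_add hk, E_add hk]
    field_simp
    linear_combination z * h3t

lemma phi_eq_iff {x y z : ℂ} (hx : x ≠ 0) (hy : y ≠ 0) (hz : z ≠ 0) (hk : k ≠ 0)
    (a b a' b' : ZMod k) :
    phi x y z hx k a b = phi x y z hx k a' b' ↔
      ∃ t : ZMod k, 3 • t = 0 ∧ a = a' + t ∧ b = b' + t := by
  rw [phi, phi, Projectivization.mk_eq_mk_iff]
  constructor
  · rintro ⟨u, hu⟩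
    have h0 := congrFun hu 0
    have h1 := congrFun hu 1
    have h2 := congrFun hu 2
    simp only [phiv, Units.smul_def, Pi.smul_apply, Matrix.cons_val_zero, Matrix.cons_val_one,
      Matrix.head_cons, Matrix.cons_val_two, Matrix.tail_cons, smul_eq_mul] at h0 h1 h2
    have e0 : (u : ℂ) * E k a' = E k a := by
      rw [← mul_assoc] at h0; exact mul_right_cancel₀ hx h0
    have e1 : (u : ℂ) * E k b' = E k b := by
      rw [← mul_assoc] at h1; exact mul_right_cancel₀ hy h1
    have e2 : (u : ℂ) * (E k a' * E k b')⁻¹ = (E k a * E k b)⁻¹ := by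
      rw [← mul_assoc] at h2; exact mul_right_cancel₀ hz h2
    have hA : (E k a * E k b) ≠ 0 := mul_ne_zero (E_ne_zero k a) (E_ne_zero k b)
    have hA' : (E k a' * E k b') ≠ 0 := mul_ne_zero (E_ne_zero k a') (E_ne_zero k b')
    have e2' : E k a * E k b * (u : ℂ) = E k a' * E k b' := by
      calc E k a * E k b * (u : ℂ)
          = (E k a * E k b) * ((u : ℂ) * (E k a' * E k b')⁻¹) * (E k a' * E k b') := by
            rw [mul_assoc (E k a * E k b), mul_assoc (u : ℂ), inv_mul_cancel₀ hA', mul_one]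
        _ = (E k a * E k b) * (E k a * E k b)⁻¹ * (E k a' * E k b') := by rw [e2]
        _ = E k a' * E k b' := by rw [mul_inv_cancel₀ hA, one_mul]
    have hab : a + b' = a' + b := by
      apply E_inj hk
      rw [E_add hk, E_add hk]
      calc E k a * E k b' = ((u : ℂ) * E k a') * E k b' := by rw [e0]
        _ = E k a' * ((u : ℂ) * E k b') := by ring
        _ = E k a' * E k b := by rw [e1]
    have h3 : a + b + a = a' + b' + a' := by
      apply E_inj hk
      rw [E_add hk, E_add hk, E_add hk, E_add hk]
      linear_combination (E k a' : ℂ) * e2' - (E k a * E k b) * e0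
    refine ⟨a - a', ?_, by ring, by linear_combination -hab⟩
    rw [nsmul_eq_mul, Nat.cast_ofNat]
    linear_combination h3 + hab
  · rintro ⟨t, ht, rfl, rfl⟩
    exact ⟨Units.mk0 (E k t) (E_ne_zero k t),
      by rw [Units.smul_def, Units.val_mk0, smul_phiv hk ht]⟩

lemma orbit_eq {x y z : ℂ} (hx : x ≠ 0) (hy : y ≠ 0) (hz : z ≠ 0) (hk : 2 ≤ k) :
    projOrbitSL (genSL (genSet k)) (pt x y z (vne₀ hx)) =
      Set.range (fun q : ZMod k × ZMod k => phi x y z hx k q.1 q.2) := by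
  have hk0 : k ≠ 0 := by omega
  obtain ⟨c, hc⟩ := (Projectivization.mk_eq_mk_iff ℂ _ _
      (pt x y z (vne₀ hx)).rep_nonzero (vne₀ hx)).mp (Projectivization.mk_rep _)
  have hrep : (pt x y z (vne₀ hx)).rep = (c : ℂ) • ![x,y,z] := by
    rw [← hc, Units.smul_def]
  ext q
  constructor
  · rintro ⟨m, ⟨g, hgD, rfl⟩, hne, rfl⟩
    obtain ⟨a, b, hab⟩ := mem_form hk hgD
    exact ⟨(a, b), (mk_eq hx k a b c hrep hab hne).symm⟩
  · rintro ⟨⟨a, b⟩, rfl⟩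
    have hne : (dmat k a b).mulVec (pt x y z (vne₀ hx)).rep ≠ 0 := by
      rw [hrep, mulVec_eq]
      exact smul_ne_zero c.ne_zero (phiv_ne hx y z k a b)
    exact ⟨dmat k a b, ⟨dsl k a b, dsl_mem hk a b, rfl⟩, hne, mk_eq hx k a b c hrep rfl hne⟩

lemma encard_range_eq {α β : Type*} [Fintype α] (f : α → β) (hf : Function.Injective f) :
    (Set.range f).encard = Nat.card α := by
  rw [← Set.image_univ, Set.InjOn.encard_image hf.injOn, Set.encard_univ,
    ENat.card_eq_coe_fintype_card, Nat.card_eq_fintype_card]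

end Stmt3

/-- For `k ≥ 2`, `ζ = exp(2πi/k)` and `D ≤ SL(3,ℂ)` generated by
`diag(ζ,1,ζ⁻¹)` and `diag(1,ζ,ζ⁻¹)`, and `x, y, z` all nonzero, if the `D`-orbit of
`[x:y:z]` has fewer than `k²` elements and at most `8` elements, then `k = 3` and the
orbit has exactly `3` elements. -/
theorem statement3 (k : ℕ) (hk : 2 ≤ k) (x y z : ℂ) (hx : x ≠ 0) (hy : y ≠ 0) (hz : z ≠ 0)
    (D : Subgroup SL3)
    (hD : D = genSL {Matrix.diagonal ![zeta k, 1, (zeta k)⁻¹],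
                     Matrix.diagonal ![1, zeta k, (zeta k)⁻¹]})
    (hlt : (projOrbitSL D (pt x y z (vne₀ hx))).encard < ((k ^ 2 : ℕ) : ℕ∞))
    (hle : (projOrbitSL D (pt x y z (vne₀ hx))).encard ≤ 8) :
    k = 3 ∧ (projOrbitSL D (pt x y z (vne₀ hx))).encard = 3 := by
  classical
  have hk0 : k ≠ 0 := by omega
  have hNZ : NeZero k := ⟨hk0⟩
  have hD' : D = genSL (Stmt3.genSet k) := hD
  rw [hD', Stmt3.orbit_eq hx hy hz hk] at hlt hle ⊢
  -- Step 1 : 3 ∣ k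
  have h3k : 3 ∣ k := by
    by_contra h3
    have hcop : Nat.Coprime 3 k := (Nat.prime_three.coprime_iff_not_dvd).mpr h3
    have hinj : Function.Injective (fun q : ZMod k × ZMod k => Stmt3.phi x y z hx k q.1 q.2) := by
      rintro ⟨a, b⟩ ⟨a', b'⟩ h
      obtain ⟨t, ht, ha, hb⟩ := (Stmt3.phi_eq_iff hx hy hz hk0 a b a' b').mp h
      have htval : k ∣ 3 * t.val := (Stmt3.smul3 hk0 t).mp ht
      have hdvd : k ∣ t.val := Nat.Coprime.dvd_of_dvd_mul_left hcop.symm htval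
      have hv0 : t.val = 0 := Nat.eq_zero_of_dvd_of_lt hdvd t.val_lt
      have ht0 : t = 0 := by
        rw [← ZMod.natCast_rightInverse t, hv0, Nat.cast_zero]
      rw [Prod.ext_iff]
      exact ⟨by rw [ha, ht0, add_zero], by rw [hb, ht0, add_zero]⟩
    rw [Stmt3.encard_range_eq _ hinj, Nat.card_prod, Nat.card_zmod, ← sq] at hlt
    exact lt_irrefl _ hlt
  -- Step 2 : k = 3
  have hfib : ∀ q ∈ Finset.univ.image (fun q : ZMod k × ZMod k => Stmt3.phi x y z hx k q.1 q.2),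
      (Finset.univ.filter
        (fun p : ZMod k × ZMod k => Stmt3.phi x y z hx k p.1 p.2 = q)).card ≤ 3 := by
    intro q hq
    obtain ⟨p0, -, rfl⟩ := Finset.mem_image.mp hq
    have h3 : (Finset.range 3).card = 3 := by simp
    rw [← h3]
    apply Finset.card_le_card_of_injOn (fun p => 3 * (p.1 - p0.1).val / k)
    · intro p hp
      simp only [Finset.mem_coe, Finset.mem_filter, Finset.mem_univ, true_and] at hp
      obtain ⟨t, ht, ha, hb⟩ := (Stmt3.phi_eq_iff hx hy hz hk0 _ _ _ _).mp hp
      have he : p.1 - p0.1 = t := by rw [ha]; ring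
      simp only [Finset.mem_coe, Finset.mem_range]
      rw [he]
      exact Nat.div_lt_of_lt_mul (by have := t.val_lt; omega)
    · rintro p hp p' hp' heq
      simp only [Finset.coe_filter, Set.mem_setOf_eq, Finset.mem_univ, true_and] at hp hp'
      obtain ⟨t, ht, ha, hb⟩ := (Stmt3.phi_eq_iff hx hy hz hk0 _ _ _ _).mp hp
      obtain ⟨t', ht', ha', hb'⟩ := (Stmt3.phi_eq_iff hx hy hz hk0 _ _ _ _).mp hp'
      have he : p.1 - p0.1 = t := by rw [ha]; ring
      have he' : p'.1 - p0.1 = t' := by rw [ha']; ring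
      have heq' : 3 * (p.1 - p0.1).val / k = 3 * (p'.1 - p0.1).val / k := heq
      rw [he, he'] at heq'
      obtain ⟨m, hm⟩ := (Stmt3.smul3 hk0 t).mp ht
      obtain ⟨m', hm'⟩ := (Stmt3.smul3 hk0 t').mp ht'
      have hkpos : 0 < k := by omega
      simp only [hm, hm', Nat.mul_div_cancel_left _ hkpos] at heq'

      have hval : t.val = t'.val := by
        have h33 : 3 * t.val = 3 * t'.val := by rw [hm, heq', ← hm']
        omega
      have htt : t = t' := ZMod.val_injective k hval
      rw [Prod.ext_iff]
      exact ⟨by rw [ha, ha', htt], by rw [hb, hb', htt]⟩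
  have hcardle := Finset.card_le_mul_card_image
    (f := fun q : ZMod k × ZMod k => Stmt3.phi x y z hx k q.1 q.2) Finset.univ 3 hfib
  have hcu : (Finset.univ : Finset (ZMod k × ZMod k)).card = k * k := by
    simp [Finset.card_univ, ZMod.card]
  have him : (Finset.univ.image
      (fun q : ZMod k × ZMod k => Stmt3.phi x y z hx k q.1 q.2)).card ≤ 8 := by
    have h1 : ((Finset.univ.image
        (fun q : ZMod k × ZMod k => Stmt3.phi x y z hx k q.1 q.2) : Finset P2) : Set P2).encard
        ≤ 8 := by
      rw [Finset.coe_image, Finset.coe_univ, Set.image_univ]; exact hle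
    rw [Set.encard_coe_eq_coe_finsetCard] at h1
    exact_mod_cast h1
  rw [hcu] at hcardle
  have h24 : k * k ≤ 24 := le_trans hcardle (by omega)
  have hk4 : k ≤ 4 := by nlinarith
  have hk3 : k = 3 := by omega
  subst hk3
  refine ⟨rfl, ?_⟩
  have hall : ∀ t : ZMod 3, 3 • t = 0 := by decide
  have hkey : Set.range (fun q : ZMod 3 × ZMod 3 => Stmt3.phi x y z hx 3 q.1 q.2) =
      Set.range (fun c : ZMod 3 => Stmt3.phi x y z hx 3 c 0) := by
    apply Set.Subset.antisymm
    · rintro _ ⟨⟨a, b⟩, rfl⟩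
      exact ⟨a - b, (Stmt3.phi_eq_iff hx hy hz (by norm_num) (a - b) 0 a b).mpr
        ⟨-b, hall _, by ring, by ring⟩⟩
    · rintro _ ⟨c, rfl⟩
      exact ⟨(c, 0), rfl⟩
  rw [hkey, Stmt3.encard_range_eq _ ?_, Nat.card_zmod]
  · rfl
  · intro c c' h
    obtain ⟨t, ht, hc1, hc2⟩ := (Stmt3.phi_eq_iff hx hy hz (by norm_num) c 0 c' 0).mp h
    rw [zero_add] at hc2
    rw [hc1, ← hc2, add_zero]
end
end

section
/- For integers a, k ≥ 1 let g₍ₐ,ₖ₎ = diag(ζ_k, ζ_k^a, ζ_k^{-(a+1)}) ∈ SL(3,ℂ) and let T₍ₐ,ₖ₎ ≤ SL(3,ℂ) be the subgroup generated by g₍ₐ,ₖ₎ and M_τ; let W = ζ₃·I₃ be the scalar matrix with entries ζ₃. Then: (i) T₍₁₆,₂₁₎ equals the subgroup generated by T₍₂,₇₎ together with W; (ii) T₍₄,₂₁₎ equals the subgroup generated by T₍₄,₇₎ together with W; (iii) there exists h ∈ SL(3,ℂ) with h·T₍₂,₇₎·h⁻¹ = T₍₄,₇₎. -/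
open Matrix Complex

noncomputable section

/-- The underlying set of matrices of a subgroup of `SL(3,ℂ)`. -/
def matSet (G : Subgroup SL3) : Set M3 := (fun g : SL3 => (g : M3)) '' (G : Set SL3)

/-- `g₍ₐ,ₖ₎ = diag(ζ_k, ζ_k^a, ζ_k^{-(a+1)})`. -/
def gMat (a k : ℕ) : M3 := Matrix.diagonal ![zeta k, zeta k ^ a, (zeta k ^ (a + 1))⁻¹]

/-- `T₍ₐ,ₖ₎`, the subgroup of `SL(3,ℂ)` generated by `g₍ₐ,ₖ₎` and `M_τ`. -/
def Tgrp (a k : ℕ) : Subgroup SL3 := genSL {gMat a k, Mtau}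

/-- The scalar matrix `W = ζ₃·I₃`. -/
def Wmat : M3 := zeta 3 • (1 : M3)


/-! ### Auxiliary lemmas -/

lemma zeta_ne (n : ℕ) : zeta n ≠ 0 := Complex.exp_ne_zero _

lemma zeta_pow_self (n : ℕ) (hn : n ≠ 0) : zeta n ^ n = 1 := by
  have h : (n:ℂ) ≠ 0 := Nat.cast_ne_zero.mpr hn
  rw [zeta, ← Complex.exp_nat_mul,
    show (n:ℂ) * (2*Real.pi*Complex.I/n) = 2*Real.pi*Complex.I by field_simp]
  exact Complex.exp_two_pi_mul_I

lemma zeta_mul_pow (m n : ℕ) (hm : m ≠ 0) (hn : n ≠ 0) : zeta (m*n) ^ m = zeta n := by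
  have h1 : (m:ℂ) ≠ 0 := Nat.cast_ne_zero.mpr hm
  have h2 : (n:ℂ) ≠ 0 := Nat.cast_ne_zero.mpr hn
  rw [zeta, zeta, ← Complex.exp_nat_mul]; congr 1; push_cast; field_simp

lemma zeta_pow_congr (n : ℕ) (hn : n ≠ 0) {a b : ℕ} (h : a % n = b % n) :
    zeta n ^ a = zeta n ^ b := by
  conv_lhs => rw [← Nat.div_add_mod a n]
  conv_rhs => rw [← Nat.div_add_mod b n]
  rw [h, pow_add, pow_add, pow_mul, pow_mul, zeta_pow_self n hn, one_pow, one_pow]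

lemma zeta_inv_eq (n : ℕ) (hn : n ≠ 0) {a b : ℕ} (h : (a+b) % n = 0) :
    (zeta n ^ a)⁻¹ = zeta n ^ b := by
  apply inv_eq_of_mul_eq_one_right
  rw [← pow_add, zeta_pow_congr n hn (a := a+b) (b := 0) (by simp [h]), pow_zero]

lemma z7 : zeta 7 = zeta 21 ^ 3 := by
  simpa using (zeta_mul_pow 3 7 (by norm_num) (by norm_num)).symm

lemma z3 : zeta 3 = zeta 21 ^ 7 := by
  simpa using (zeta_mul_pow 7 3 (by norm_num) (by norm_num)).symm

lemma zpc {a b : ℕ} (h : a % 21 = b % 21) : zeta 21 ^ a = zeta 21 ^ b :=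
  zeta_pow_congr 21 (by norm_num) h

lemma zpc1 {a : ℕ} (h : a % 21 = 1) : zeta 21 ^ a = zeta 21 := by
  conv_rhs => rw [← pow_one (zeta 21)]
  exact zpc (a := a) (b := 1) (by simp [h])

lemma diag3 (x y z : ℂ) : Matrix.diagonal ![x,y,z] = !![x,0,0;0,y,0;0,0,z] := by
  ext i j
  fin_cases i <;> fin_cases j <;>
    simp [Matrix.diagonal_apply, Matrix.vecHead, Matrix.vecTail]

lemma gMat_eq (a k r : ℕ) (hk : k ≠ 0) (h : (a + 1 + r) % k = 0) :
    gMat a k = Matrix.diagonal ![zeta k, zeta k ^ a, zeta k ^ r] := by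
  rw [gMat, zeta_inv_eq k hk (a := a+1) (b := r) h]

lemma Wmat_eq : Wmat = Matrix.diagonal ![zeta 3, zeta 3, zeta 3] := by
  rw [Wmat]; ext i j
  fin_cases i <;> fin_cases j <;>
    simp [Matrix.diagonal_apply, Matrix.one_apply, Matrix.vecHead, Matrix.vecTail]

lemma g1621 : gMat 16 21 = Matrix.diagonal ![zeta 21, zeta 21 ^ 16, zeta 21 ^ 4] :=
  gMat_eq 16 21 4 (by norm_num) (by norm_num)

lemma g421 : gMat 4 21 = Matrix.diagonal ![zeta 21, zeta 21 ^ 4, zeta 21 ^ 16] :=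
  gMat_eq 4 21 16 (by norm_num) (by norm_num)

lemma g27 : gMat 2 7 = Matrix.diagonal ![zeta 21 ^ 3, (zeta 21 ^ 3) ^ 2, (zeta 21 ^ 3) ^ 4] := by
  rw [gMat_eq 2 7 4 (by norm_num) (by norm_num), z7]

lemma g47 : gMat 4 7 = Matrix.diagonal ![zeta 21 ^ 3, (zeta 21 ^ 3) ^ 4, (zeta 21 ^ 3) ^ 2] := by
  rw [gMat_eq 4 7 2 (by norm_num) (by norm_num), z7]

lemma matA1 : gMat 16 21 ^ 3 = gMat 2 7 := by
  rw [g1621, g27, Matrix.diagonal_pow]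
  refine congrArg Matrix.diagonal ?_
  funext i
  fin_cases i <;> simp [← pow_mul] <;>
    · first
      | (apply zpc1; norm_num)
      | (apply zpc; norm_num)

lemma matA2 : gMat 16 21 ^ 7 = Wmat := by
  rw [g1621, Wmat_eq, z3, Matrix.diagonal_pow]
  refine congrArg Matrix.diagonal ?_
  funext i
  fin_cases i <;> simp [← pow_mul] <;>
    · first
      | (apply zpc1; norm_num)
      | (apply zpc; norm_num)

lemma matA3 : gMat 2 7 ^ 5 * Wmat = gMat 16 21 := by
  rw [g27, g1621, Wmat_eq, z3, Matrix.diagonal_pow, Matrix.diagonal_mul_diagonal]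
  refine congrArg Matrix.diagonal ?_
  funext i
  fin_cases i <;> simp [← pow_mul, ← pow_add] <;>
    · first
      | (apply zpc1; norm_num)
      | (apply zpc; norm_num)

lemma matB1 : gMat 4 21 ^ 3 = gMat 4 7 := by
  rw [g421, g47, Matrix.diagonal_pow]
  refine congrArg Matrix.diagonal ?_
  funext i
  fin_cases i <;> simp [← pow_mul] <;>
    · first
      | (apply zpc1; norm_num)
      | (apply zpc; norm_num)

lemma matB2 : gMat 4 21 ^ 7 = Wmat := by
  rw [g421, Wmat_eq, z3, Matrix.diagonal_pow]
  refine congrArg Matrix.diagonal ?_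
  funext i
  fin_cases i <;> simp [← pow_mul] <;>
    · first
      | (apply zpc1; norm_num)
      | (apply zpc; norm_num)

lemma matB3 : gMat 4 7 ^ 5 * Wmat = gMat 4 21 := by
  rw [g47, g421, Wmat_eq, z3, Matrix.diagonal_pow, Matrix.diagonal_mul_diagonal]
  refine congrArg Matrix.diagonal ?_
  funext i
  fin_cases i <;> simp [← pow_mul, ← pow_add] <;>
    · first
      | (apply zpc1; norm_num)
      | (apply zpc; norm_num)

lemma matC : Mtau ^ 3 = 1 := by
  rw [pow_succ, pow_succ, pow_succ, pow_zero, one_mul, Mtau]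
  norm_num [Matrix.mul_fin_three, ← Matrix.one_fin_three]

/-- The conjugating matrix `-P` where `P` swaps the last two coordinates. -/
def Pmat : M3 := !![-1,0,0;0,0,-1;0,-1,0]

lemma det_Pmat : Pmat.det = 1 := by rw [Pmat, Matrix.det_fin_three]; simp

lemma det_Mtau : Mtau.det = 1 := by rw [Mtau, Matrix.det_fin_three]; simp

lemma det_Wmat : Wmat.det = 1 := by
  rw [Wmat, Matrix.det_smul, Matrix.det_one]
  simpa using zeta_pow_self 3 (by norm_num)

lemma det_gMat (a k : ℕ) : (gMat a k).det = 1 := by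
  rw [gMat, Matrix.det_diagonal, Fin.prod_univ_three]
  have h : zeta k ^ (a+1) ≠ 0 := pow_ne_zero _ (zeta_ne k)
  simp [Matrix.vecHead, Matrix.vecTail]
  field_simp
  ring

lemma matD1 : Pmat * gMat 2 7 = gMat 4 7 * Pmat := by
  rw [gMat_eq 2 7 4 (by norm_num) (by norm_num), gMat_eq 4 7 2 (by norm_num) (by norm_num),
    diag3, diag3, Pmat]
  norm_num [Matrix.mul_fin_three]

lemma matD2 : Pmat * Mtau = Mtau ^ 2 * Pmat := by
  rw [pow_two, Mtau, Pmat]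
  norm_num [Matrix.mul_fin_three]

/-! ### SL3 elements -/

def gSL (a k : ℕ) : SL3 := ⟨gMat a k, det_gMat a k⟩
def tSL : SL3 := ⟨Mtau, det_Mtau⟩
def wSL : SL3 := ⟨Wmat, det_Wmat⟩
def pSL : SL3 := ⟨Pmat, det_Pmat⟩

lemma mem_pair_lift {A B : M3} (hA : A.det = 1) (hB : B.det = 1) :
    {g : SL3 | (g : M3) ∈ ({A, B} : Set M3)} = {(⟨A,hA⟩ : SL3), ⟨B,hB⟩} := by
  ext g
  simp only [Set.mem_setOf_eq, Set.mem_insert_iff, Set.mem_singleton_iff]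
  constructor
  · rintro (h|h)
    · exact Or.inl (Subtype.ext h)
    · exact Or.inr (Subtype.ext h)
  · rintro (rfl|rfl)
    · exact Or.inl rfl
    · exact Or.inr rfl

lemma Tgrp_eq (a k : ℕ) : Tgrp a k = Subgroup.closure {gSL a k, tSL} := by
  rw [Tgrp, genSL, mem_pair_lift (det_gMat a k) det_Mtau]
  rfl

lemma genSL_union (G : Subgroup SL3) :
    genSL (matSet G ∪ {Wmat}) = G ⊔ Subgroup.closure {wSL} := by
  rw [genSL]
  have hset : {g : SL3 | (g : M3) ∈ matSet G ∪ {Wmat}} = ↑G ∪ {wSL} := by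
    ext g
    simp only [Set.mem_union, Set.mem_setOf_eq, Set.mem_singleton_iff, matSet,
      SetLike.mem_coe]
    constructor
    · rintro (⟨x, hx, he⟩|h)
      · exact Or.inl (by rwa [show x = g from Subtype.ext he] at hx)
      · exact Or.inr (Subtype.ext h)
    · rintro (h|rfl)
      · exact Or.inl ⟨g, h, rfl⟩
      · exact Or.inr rfl
  rw [hset, Subgroup.closure_union, Subgroup.closure_eq]

lemma sl_A1 : gSL 16 21 ^ 3 = gSL 2 7 := Subtype.ext (by push_cast [gSL]; exact matA1)
lemma sl_A2 : gSL 16 21 ^ 7 = wSL := Subtype.ext (by push_cast [gSL, wSL]; exact matA2)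
lemma sl_A3 : gSL 2 7 ^ 5 * wSL = gSL 16 21 := Subtype.ext (by push_cast [gSL, wSL]; exact matA3)
lemma sl_B1 : gSL 4 21 ^ 3 = gSL 4 7 := Subtype.ext (by push_cast [gSL]; exact matB1)
lemma sl_B2 : gSL 4 21 ^ 7 = wSL := Subtype.ext (by push_cast [gSL, wSL]; exact matB2)
lemma sl_B3 : gSL 4 7 ^ 5 * wSL = gSL 4 21 := Subtype.ext (by push_cast [gSL, wSL]; exact matB3)
lemma sl_C : tSL ^ 3 = 1 := Subtype.ext (by push_cast [tSL]; exact matC)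
lemma sl_D1 : pSL * gSL 2 7 = gSL 4 7 * pSL := Subtype.ext (by push_cast [pSL, gSL]; exact matD1)
lemma sl_D2 : pSL * tSL = tSL ^ 2 * pSL := Subtype.ext (by push_cast [pSL, tSL]; exact matD2)

lemma closure_part (gbig gsmall : SL3)
    (h1 : gbig ^ 3 = gsmall) (h2 : gbig ^ 7 = wSL) (h3 : gsmall ^ 5 * wSL = gbig) :
    Subgroup.closure {gbig, tSL} =
      Subgroup.closure {gsmall, tSL} ⊔ Subgroup.closure {wSL} := by
  apply le_antisymm
  · rw [Subgroup.closure_le]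
    rintro g hg
    rcases hg with rfl | h
    · have hb : gsmall ∈ Subgroup.closure {gsmall, tSL} ⊔ Subgroup.closure {wSL} :=
        Subgroup.mem_sup_left (Subgroup.subset_closure (Or.inl rfl))
      have hw : wSL ∈ Subgroup.closure {gsmall, tSL} ⊔ Subgroup.closure {wSL} :=
        Subgroup.mem_sup_right (Subgroup.subset_closure rfl)
      have := mul_mem (pow_mem hb 5) hw
      rwa [h3] at this
    · rcases h with rfl
      exact Subgroup.mem_sup_left (Subgroup.subset_closure (Or.inr rfl))
  · rw [sup_le_iff]
    constructor <;> rw [Subgroup.closure_le]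
    · rintro g hg
      have hbig : gbig ∈ Subgroup.closure {gbig, tSL} :=
        Subgroup.subset_closure (Or.inl rfl)
      rcases hg with rfl | h
      · have := pow_mem hbig 3
        rwa [h1] at this
      · rcases h with rfl
        exact Subgroup.subset_closure (Or.inr rfl)
    · rintro g rfl
      have hbig : gbig ∈ Subgroup.closure {gbig, tSL} :=
        Subgroup.subset_closure (Or.inl rfl)
      have := pow_mem hbig 7
      rwa [h2] at this

/-- (i) `T₍₁₆,₂₁₎` is generated by `T₍₂,₇₎` together with `W`;
(ii) `T₍₄,₂₁₎` is generated by `T₍₄,₇₎` together with `W`;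
(iii) `T₍₂,₇₎` and `T₍₄,₇₎` are conjugate in `SL(3,ℂ)`. -/
theorem statement4 :
    Tgrp 16 21 = genSL (matSet (Tgrp 2 7) ∪ {Wmat}) ∧
    Tgrp 4 21 = genSL (matSet (Tgrp 4 7) ∪ {Wmat}) ∧
    ∃ h : SL3, Subgroup.map (MulAut.conj h).toMonoidHom (Tgrp 2 7) = Tgrp 4 7 := by
  constructor
  · rw [Tgrp_eq 16 21, genSL_union, Tgrp_eq 2 7]
    exact closure_part _ _ sl_A1 sl_A2 sl_A3
  constructor
  · rw [Tgrp_eq 4 21, genSL_union, Tgrp_eq 4 7]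
    exact closure_part _ _ sl_B1 sl_B2 sl_B3
  · refine ⟨pSL, ?_⟩
    rw [Tgrp_eq 2 7, Tgrp_eq 4 7, MonoidHom.map_closure]
    have e1 : pSL * gSL 2 7 * pSL⁻¹ = gSL 4 7 := by
      rw [mul_inv_eq_iff_eq_mul]; exact sl_D1
    have e2 : pSL * tSL * pSL⁻¹ = tSL ^ 2 := by
      rw [mul_inv_eq_iff_eq_mul]; exact sl_D2
    have himg : (MulAut.conj pSL).toMonoidHom '' {gSL 2 7, tSL} = {gSL 4 7, tSL ^ 2} := by
      rw [Set.image_pair]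
      rw [show (MulAut.conj pSL).toMonoidHom (gSL 2 7) = gSL 4 7 from e1,
        show (MulAut.conj pSL).toMonoidHom tSL = tSL ^ 2 from e2]
    rw [himg]
    have h4 : (tSL ^ 2) ^ 2 = tSL := by
      have h34 : (tSL ^ 2) ^ 2 = tSL ^ 3 * tSL := by group
      rw [h34, sl_C, one_mul]
    apply le_antisymm <;> rw [Subgroup.closure_le]
    · rintro g (rfl | h)
      · exact Subgroup.subset_closure (Or.inl rfl)
      · rcases h with rfl
        have ht : tSL ∈ Subgroup.closure ({gSL 4 7, tSL} : Set SL3) :=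
          Subgroup.subset_closure (Or.inr rfl)
        exact pow_mem ht 2
    · rintro g (rfl | h)
      · exact Subgroup.subset_closure (Or.inl rfl)
      · rcases h with rfl
        have ht : tSL ^ 2 ∈ Subgroup.closure ({gSL 4 7, tSL ^ 2} : Set SL3) :=
          Subgroup.subset_closure (Or.inr rfl)
        have h5 := pow_mem ht 2
        rwa [h4] at h5
end
end

section
/- Let T ≤ SL(3,ℂ) be the subgroup generated by diag(ζ₇, ζ₇², ζ₇⁴) and M_τ. Then: (i) for every point X ∈ ℙ² other than [1:0:0], [0:1:0], [0:0:1], if the T-orbit of X has at most 8 elements then it has exactly 7 elements and contains the point [1:ζ₃^c:ζ₃^{2c}] for some c ∈ {0,1,2}; (ii) the points [1:1:1], [1:ζ₃:ζ₃²], [1:ζ₃²:ζ₃] lie in three pairwise distinct T-orbits, each of which has exactly 7 elements; (iii) each of these three orbits has no three collinear points, and no six points of any of these orbits lie on a conic. -/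
open Matrix Complex

noncomputable section

/-- The subgroup of `SL(3,ℂ)` generated by `diag(ζ₇, ζ₇², ζ₇⁴)` and `M_τ`. -/
def T7 : Subgroup SL3 := genSL {Matrix.diagonal ![zeta 7, zeta 7 ^ 2, zeta 7 ^ 4], Mtau}


namespace S5

open Projectivization

lemma zeta_prim (n : ℕ) (hn : n ≠ 0) : IsPrimitiveRoot (zeta n) n := by
  simpa [zeta] using Complex.isPrimitiveRoot_exp n hn

def ζ : ℂ := zeta 7
def ω : ℂ := zeta 3

lemma hζ : IsPrimitiveRoot ζ 7 := zeta_prim 7 (by norm_num)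
lemma hω : IsPrimitiveRoot ω 3 := zeta_prim 3 (by norm_num)
lemma ζ7 : ζ ^ 7 = 1 := hζ.pow_eq_one
lemma ω3 : ω ^ 3 = 1 := hω.pow_eq_one
lemma ζne : ζ ≠ 0 := Complex.exp_ne_zero _
lemma ωne : ω ≠ 0 := Complex.exp_ne_zero _

lemma ζ_pow_mul7 (k : ℕ) : ζ ^ (7 * k) = 1 := by rw [pow_mul, ζ7, one_pow]

lemma ζ_pow_mod (n : ℕ) : ζ ^ n = ζ ^ (n % 7) := by
  conv_lhs => rw [← Nat.div_add_mod n 7]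
  rw [pow_add, pow_mul, ζ7, one_pow, one_mul]

lemma ω_pow_mod (n : ℕ) : ω ^ n = ω ^ (n % 3) := by
  conv_lhs => rw [← Nat.div_add_mod n 3]
  rw [pow_add, pow_mul, ω3, one_pow, one_mul]

lemma ω_pow_ne (c : ℕ) : ω ^ c ≠ 0 := pow_ne_zero _ ωne
lemma ζ_pow_ne (n : ℕ) : ζ ^ n ≠ 0 := pow_ne_zero _ ζne

lemma ω_cube (c : ℕ) : (ω ^ c) ^ 3 = 1 := by
  rw [← pow_mul, mul_comm, pow_mul, ω3, one_pow]

/-- if `x^7 = 1` and `x * ω^j = ω^k` then `ω^j = ω^k`. -/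
lemma seven_pow_trick {x : ℂ} (hx : x ^ 7 = 1) {j k : ℕ} (h : x * ω ^ j = ω ^ k) :
    ω ^ j = ω ^ k := by
  have h7 : (x * ω ^ j) ^ 7 = (ω ^ k) ^ 7 := by rw [h]
  have e : ∀ m : ℕ, (ω ^ m) ^ 7 = ω ^ m := by
    intro m
    have : (ω ^ m) ^ 7 = ((ω ^ m) ^ 3) ^ 2 * ω ^ m := by ring
    rw [this, ω_cube, one_pow, one_mul]
  rw [mul_pow, hx, one_mul, e, e] at h7
  exact h7

/-- sums of three distinct 7th roots of unity are nonzero -/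
lemma sum_three_ne (a b c : ℕ) : ζ ^ a + ζ ^ b + ζ ^ c ≠ 0 := by
  intro h0
  have hint : IsIntegral ℤ ζ := by
    refine ⟨Polynomial.X ^ 7 - 1, ?_, ?_⟩
    · apply Polynomial.monic_X_pow_sub_C (1:ℤ) (by norm_num)
    · simp [ζ7]
  set p : Polynomial ℤ := Polynomial.X ^ a + Polynomial.X ^ b + Polynomial.X ^ c with hp
  have haev : Polynomial.aeval ζ p = 0 := by simp [hp, h0]
  have hdvd : minpoly ℤ ζ ∣ p := minpoly.isIntegrallyClosed_dvd hint haev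
  rw [← Polynomial.cyclotomic_eq_minpoly hζ (by norm_num)] at hdvd
  obtain ⟨q, hq⟩ := hdvd
  haveI : Fact (Nat.Prime 7) := ⟨by norm_num⟩
  have heq := congrArg (Polynomial.eval 1) hq
  simp [hp, Polynomial.eval_one_cyclotomic_prime] at heq
  have h7 : (7 : ℤ) ∣ 3 := ⟨Polynomial.eval 1 q, heq⟩
  norm_num at h7




lemma sumω : 1 + ω + ω ^ 2 = 0 := by
  have h1 : (ω - 1) * (1 + ω + ω ^ 2) = 0 := by linear_combination ω3
  rcases mul_eq_zero.1 h1 with h | h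
  · exact absurd (sub_eq_zero.1 h) (hω.ne_one (by norm_num))
  · exact h

lemma cube_roots {s : ℂ} (hs : s ^ 3 = 1) : ∃ c : Fin 3, s = ω ^ (c : ℕ) := by
  have h1 : (s - 1) * ((s - ω) * (s - ω ^ 2)) = 0 := by
    linear_combination hs + (s - s^2) * sumω + (s - 1) * ω3
  rcases mul_eq_zero.1 h1 with h | h
  · exact ⟨0, by simpa [sub_eq_zero] using h⟩
  rcases mul_eq_zero.1 h with h | h
  · exact ⟨1, by simpa [sub_eq_zero] using h⟩
  · exact ⟨2, by simpa [sub_eq_zero] using h⟩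

def D : M3 := Matrix.diagonal ![ζ, ζ^2, ζ^4]

lemma Ddef : D = !![ζ,0,0; 0,ζ^2,0; 0,0,ζ^4] := by
  ext i j
  fin_cases i <;> fin_cases j <;>
    simp [D, Matrix.diagonal, Matrix.vecHead, Matrix.vecTail]

lemma detD : D.det = 1 := by
  rw [Ddef, Matrix.det_fin_three]
  simp
  linear_combination ζ7

lemma detM : Mtau.det = 1 := by
  rw [Mtau, Matrix.det_fin_three]
  norm_num
  change (1:ℂ) * 1 = 1
  norm_num

def dsl : SL3 := ⟨D, detD⟩
def tsl : SL3 := ⟨Mtau, detM⟩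

lemma ζ14 : ζ ^ 14 = 1 := by rw [show (14:ℕ) = 7*2 by norm_num, pow_mul, ζ7, one_pow]
lemma ζ28 : ζ ^ 28 = 1 := by rw [show (28:ℕ) = 7*4 by norm_num, pow_mul, ζ7, one_pow]
lemma ζ8 : ζ ^ 8 = ζ := by rw [pow_succ, ζ7, one_mul]

lemma D7 : D ^ 7 = 1 := by
  rw [D, Matrix.diagonal_pow]
  ext i j
  fin_cases i <;> fin_cases j <;>
    simp [Matrix.diagonal, Pi.pow_apply, Matrix.one_apply, ← pow_mul, ζ7, ζ14, ζ28,
      Matrix.vecHead, Matrix.vecTail]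

lemma M3eq : Mtau ^ 3 = 1 := by
  rw [pow_succ, pow_succ, pow_one, Mtau, Matrix.mul_fin_three, Matrix.mul_fin_three,
    Matrix.one_fin_three]
  norm_num

lemma swap1 : Mtau * D = D ^ 2 * Mtau := by
  rw [pow_two, Ddef, Mtau, Matrix.mul_fin_three, Matrix.mul_fin_three, Matrix.mul_fin_three]
  ext i j
  fin_cases i <;> fin_cases j <;> simp <;> try ring
  linear_combination (-ζ) * ζ7

lemma dsl7 : dsl ^ 7 = 1 := by
  apply Subtype.ext
  exact D7

lemma tsl3 : tsl ^ 3 = 1 := by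
  apply Subtype.ext
  exact M3eq

lemma swapsl : tsl * dsl = dsl ^ 2 * tsl := by
  apply Subtype.ext
  exact swap1

lemma swap_pow_c (c : ℕ) : tsl * dsl ^ c = dsl ^ (2 * c) * tsl := by
  induction c with
  | zero => simp
  | succ n ih =>
      calc tsl * dsl ^ (n+1) = (tsl * dsl ^ n) * dsl := by rw [pow_succ]; group
        _ = dsl ^ (2*n) * (tsl * dsl) := by rw [ih]; group
        _ = dsl ^ (2*n) * (dsl ^ 2 * tsl) := by rw [swapsl]
        _ = dsl ^ (2*(n+1)) * tsl := by
              rw [show 2*(n+1) = 2*n+2 by ring, pow_add]; group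

lemma swap_pow (b c : ℕ) : tsl ^ b * dsl ^ c = dsl ^ (c * 2 ^ b) * tsl ^ b := by
  induction b generalizing c with
  | zero => simp
  | succ n ih =>
      calc tsl ^ (n+1) * dsl ^ c = tsl ^ n * (tsl * dsl ^ c) := by rw [pow_succ]; group
        _ = (tsl ^ n * dsl ^ (2*c)) * tsl := by rw [swap_pow_c]; group
        _ = dsl ^ (2*c*2^n) * tsl ^ n * tsl := by rw [ih, show 2*c*2^n = c*2^n*2 by ring, pow_mul']
        _ = dsl ^ (c * 2^(n+1)) * tsl ^ (n+1) := by
              rw [show 2*c*2^n = c*2^(n+1) by ring, pow_succ]; group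

lemma dsl_mem : dsl ∈ T7 := by
  apply Subgroup.subset_closure
  exact Or.inl rfl

lemma tsl_mem : tsl ∈ T7 := by
  apply Subgroup.subset_closure
  exact Or.inr rfl

lemma T7_decomp {g : SL3} (hg : g ∈ T7) : ∃ a b : ℕ, g = dsl ^ a * tsl ^ b := by
  induction hg using Subgroup.closure_induction with
  | mem g hgmem =>
      rcases hgmem with h | h
      · exact ⟨1, 0, by simp; exact Subtype.ext h⟩
      · exact ⟨0, 1, by simp; exact Subtype.ext h⟩
  | one => exact ⟨0, 0, by simp⟩
  | mul x y _ _ hx hy =>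
      obtain ⟨a, b, rfl⟩ := hx
      obtain ⟨c, d, rfl⟩ := hy
      refine ⟨a + c * 2 ^ b, b + d, ?_⟩
      rw [mul_assoc, ← mul_assoc (tsl ^ b), swap_pow, pow_add, pow_add]
      group
  | inv x _ hx =>
      obtain ⟨a, b, rfl⟩ := hx
      refine ⟨6 * a * 2 ^ (2 * b), 2 * b, ?_⟩
      rw [← swap_pow]
      apply inv_eq_of_mul_eq_one_right
      have h3 : tsl ^ b * tsl ^ (2 * b) = 1 := by
        rw [← pow_add, show b + 2 * b = 3 * b by ring, pow_mul, tsl3, one_pow]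
      have h7 : dsl ^ a * dsl ^ (6 * a) = 1 := by
        rw [← pow_add, show a + 6 * a = 7 * a by ring, pow_mul, dsl7, one_pow]
      calc dsl ^ a * tsl ^ b * (tsl ^ (2*b) * dsl ^ (6*a))
          = dsl ^ a * (tsl ^ b * tsl ^ (2*b)) * dsl ^ (6*a) := by group
        _ = 1 := by rw [h3, mul_one, h7]




lemma sl_mulVec_ne (g : SL3) {v : Fin 3 → ℂ} (hv : v ≠ 0) : (g : M3).mulVec v ≠ 0 := by
  intro h0
  apply hv
  have : ((g⁻¹ * g : SL3) : M3).mulVec v = v := by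
    rw [show (g⁻¹ * g : SL3) = 1 by group, Matrix.SpecialLinearGroup.coe_one, Matrix.one_mulVec]
  rw [Matrix.SpecialLinearGroup.coe_mul, ← Matrix.mulVec_mulVec, h0, Matrix.mulVec_zero] at this
  exact this.symm

/-- action of an `SL3` element on `P2`. -/
def act (g : SL3) (p : P2) : P2 :=
  Projectivization.mk ℂ ((g : M3).mulVec p.rep) (sl_mulVec_ne g p.rep_nonzero)

lemma mk_smul_eq {v : Fin 3 → ℂ} (hv : v ≠ 0) (c : ℂ) (hc : c ≠ 0) :
    Projectivization.mk ℂ (c • v) (smul_ne_zero hc hv) = Projectivization.mk ℂ v hv :=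
  (Projectivization.mk_eq_mk_iff ℂ _ _ _ hv).2 ⟨Units.mk0 c hc, rfl⟩

lemma act_mk (g : SL3) {v : Fin 3 → ℂ} (hv : v ≠ 0) :
    act g (Projectivization.mk ℂ v hv) = Projectivization.mk ℂ ((g : M3).mulVec v)
      (sl_mulVec_ne g hv) := by
  obtain ⟨a, ha⟩ := Projectivization.exists_smul_eq_mk_rep ℂ v hv
  rw [act]
  apply (Projectivization.mk_eq_mk_iff ℂ _ _ _ _).2
  refine ⟨a, ?_⟩
  rw [← Matrix.mulVec_smul, ha]

lemma mk_congr {v w : Fin 3 → ℂ} (hv : v ≠ 0) (hw : w ≠ 0) (h : v = w) :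
    Projectivization.mk ℂ v hv = Projectivization.mk ℂ w hw := by subst h; rfl

lemma act_act (g h : SL3) (p : P2) : act g (act h p) = act (g * h) p := by
  have h1 : act g (act h p) = Projectivization.mk ℂ
      ((g : M3).mulVec ((h : M3).mulVec p.rep))
      (sl_mulVec_ne g (sl_mulVec_ne h p.rep_nonzero)) := act_mk g _
  rw [h1]
  exact mk_congr _ _ (by rw [Matrix.mulVec_mulVec, ← Matrix.SpecialLinearGroup.coe_mul])

lemma act_one (p : P2) : act 1 p = p := by
  rw [act]
  have : ((1 : SL3) : M3).mulVec p.rep = p.rep := by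
    rw [Matrix.SpecialLinearGroup.coe_one, Matrix.one_mulVec]
  simp_rw [this]
  exact p.mk_rep

lemma mem_orbit_iff {X q : P2} {G : Subgroup SL3} :
    q ∈ projOrbitSL G X ↔ ∃ g ∈ G, act g X = q := by
  constructor
  · rintro ⟨gm, ⟨g, hgG, rfl⟩, h, rfl⟩
    exact ⟨g, hgG, rfl⟩
  · rintro ⟨g, hgG, rfl⟩
    exact ⟨(g : M3), ⟨g, hgG, rfl⟩, sl_mulVec_ne g X.rep_nonzero, rfl⟩

lemma act_mem_orbit {X : P2} {G : Subgroup SL3} {g : SL3} (hg : g ∈ G) :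
    act g X ∈ projOrbitSL G X :=
  mem_orbit_iff.2 ⟨g, hg, rfl⟩

lemma mem_orbit_self {X : P2} {G : Subgroup SL3} : X ∈ projOrbitSL G X := by
  have := act_mem_orbit (X := X) (G := G) (g := 1) (one_mem G)
  rwa [act_one] at this

lemma orbit_eq_of_mem {X Y : P2} {G : Subgroup SL3} (hY : Y ∈ projOrbitSL G X) :
    projOrbitSL G Y = projOrbitSL G X := by
  obtain ⟨h, hh, rfl⟩ := mem_orbit_iff.1 hY
  ext q
  simp only [mem_orbit_iff]
  constructor
  · rintro ⟨g, hg, rfl⟩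
    exact ⟨g * h, mul_mem hg hh, (act_act g h X).symm⟩
  · rintro ⟨g, hg, rfl⟩
    refine ⟨g * h⁻¹, mul_mem hg (inv_mem hh), ?_⟩
    rw [act_act, mul_assoc, inv_mul_cancel, mul_one]

lemma vec3_eta (v : Fin 3 → ℂ) : v = ![v 0, v 1, v 2] := by
  funext i; fin_cases i <;> rfl

/-- exponents of the diagonal matrix -/
def m : Fin 3 → ℕ := ![1, 2, 4]

lemma Dpow_apply (a : ℕ) (u : Fin 3 → ℂ) (i : Fin 3) :
    ((D ^ a).mulVec u) i = ζ ^ (m i * a) * u i := by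
  rw [D, Matrix.diagonal_pow, Matrix.mulVec_diagonal]
  fin_cases i <;>
    simp [Pi.pow_apply, m, Matrix.vecHead, Matrix.vecTail, pow_mul]

lemma Mtau_mulVec (u : Fin 3 → ℂ) : Mtau.mulVec u = ![u 1, u 2, u 0] := by
  funext i
  fin_cases i <;>
    simp [Mtau, Matrix.mulVec, dotProduct, Fin.sum_univ_three, Matrix.vecHead, Matrix.vecTail]

lemma coe_dsl_pow (a : ℕ) : ((dsl ^ a : SL3) : M3) = D ^ a := by
  rw [Matrix.SpecialLinearGroup.coe_pow]; rfl


lemma tsl_pow_mod (b : ℕ) : tsl ^ b = tsl ^ (b % 3) := by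
  conv_lhs => rw [← Nat.div_add_mod b 3]
  rw [pow_add, pow_mul, tsl3, one_pow, one_mul]

lemma dsl_pow_mod (a : ℕ) : dsl ^ a = dsl ^ (a % 7) := by
  conv_lhs => rw [← Nat.div_add_mod a 7]
  rw [pow_add, pow_mul, dsl7, one_pow, one_mul]

/-! ### Special points -/

def Pv (c a : ℕ) : Fin 3 → ℂ := ![1, ζ^a * ω^c, ζ^(3*a) * ω^(2*c)]

lemma Pv_ne (c a : ℕ) : Pv c a ≠ 0 := by
  intro h
  have := congrFun h 0
  simp [Pv] at this

lemma Pv_apply0 (c a : ℕ) : Pv c a 0 = 1 := rfl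
lemma Pv_apply1 (c a : ℕ) : Pv c a 1 = ζ^a * ω^c := rfl
lemma Pv_apply2 (c a : ℕ) : Pv c a 2 = ζ^(3*a) * ω^(2*c) := rfl

def Ppt (c a : ℕ) : P2 := Projectivization.mk ℂ (Pv c a) (Pv_ne c a)

lemma smul3 (x a b c : ℂ) : x • (![a, b, c] : Fin 3 → ℂ) = ![x*a, x*b, x*c] := by
  funext i; fin_cases i <;> simp

lemma act_dsl_pow (c a n : ℕ) : act (dsl ^ n) (Ppt c a) = Ppt c (a + n) := by
  rw [Ppt, act_mk]
  have h1 : ((dsl ^ n : SL3) : M3).mulVec (Pv c a) = (ζ ^ n) • Pv c (a + n) := by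
    rw [coe_dsl_pow]
    funext i
    rw [Dpow_apply]
    fin_cases i <;>
      simp [Pv, m, smul3, Matrix.vecHead, Matrix.vecTail, pow_add] <;> ring
  rw [show ∀ h, Projectivization.mk ℂ (((dsl ^ n : SL3) : M3).mulVec (Pv c a)) h
      = Projectivization.mk ℂ ((ζ ^ n) • Pv c (a+n)) (smul_ne_zero (ζ_pow_ne n) (Pv_ne c (a+n)))
    from fun h => mk_congr _ _ h1]
  exact mk_smul_eq _ _ (ζ_pow_ne n)

lemma act_tsl (c a : ℕ) : act tsl (Ppt c a) = Ppt c (2 * a) := by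
  rw [Ppt, act_mk]
  have h1 : ((tsl : SL3) : M3).mulVec (Pv c a) = (ζ^a * ω^c) • Pv c (2*a) := by
    show Mtau.mulVec (Pv c a) = _
    rw [Mtau_mulVec]
    funext i
    fin_cases i <;>
      simp [Pv, smul3, Matrix.vecHead, Matrix.vecTail]
    · ring
    · have : ζ^a*ω^c*(ζ^(3*(2*a))*ω^(2*c)) = (ζ^7)^a * (ω^3)^c := by ring
      rw [this, ζ7, ω3, one_pow, one_pow, one_mul]
  rw [show ∀ h, Projectivization.mk ℂ (((tsl : SL3) : M3).mulVec (Pv c a)) h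
      = Projectivization.mk ℂ ((ζ^a * ω^c) • Pv c (2*a))
        (smul_ne_zero (mul_ne_zero (ζ_pow_ne a) (ω_pow_ne c)) (Pv_ne c (2*a)))
    from fun h => mk_congr _ _ h1]
  exact mk_smul_eq _ _ (mul_ne_zero (ζ_pow_ne a) (ω_pow_ne c))

lemma Ppt_mod (c a : ℕ) : Ppt c a = Ppt c (a % 7) := by
  apply mk_congr
  have e1 : ζ ^ a = ζ ^ (a % 7) := ζ_pow_mod a
  have e2 : ζ ^ (3*a) = ζ ^ (3*(a % 7)) := by
    rw [ζ_pow_mod (3*a), ζ_pow_mod (3*(a%7))]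
    congr 1
    omega
  show ![1, ζ^a * ω^c, ζ^(3*a) * ω^(2*c)] = ![1, ζ^(a%7) * ω^c, ζ^(3*(a%7)) * ω^(2*c)]
  rw [e1, e2]

lemma act_tsl_pow_zero (c b : ℕ) : act (tsl ^ b) (Ppt c 0) = Ppt c 0 := by
  induction b with
  | zero => rw [pow_zero, act_one]
  | succ n ih =>
      rw [pow_succ', ← act_act, ih]
      have := act_tsl c 0
      rwa [mul_zero] at this

lemma orbit_Ppt (c : ℕ) :
    projOrbitSL T7 (Ppt c 0) = Set.range (fun a : Fin 7 => Ppt c (a : ℕ)) := by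
  ext q
  simp only [mem_orbit_iff, Set.mem_range]
  constructor
  · rintro ⟨g, hg, rfl⟩
    obtain ⟨a, b, rfl⟩ := T7_decomp hg
    rw [← act_act, act_tsl_pow_zero, act_dsl_pow]
    refine ⟨⟨(0+a) % 7, Nat.mod_lt _ (by norm_num)⟩, ?_⟩
    exact (Ppt_mod c (0+a)).symm
  · rintro ⟨a, rfl⟩
    refine ⟨dsl ^ (a:ℕ), pow_mem dsl_mem _, ?_⟩
    rw [act_dsl_pow, zero_add]

lemma Ppt_inj (c : ℕ) {a b : Fin 7} (h : Ppt c (a:ℕ) = Ppt c (b:ℕ)) : a = b := by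
  rw [Ppt, Ppt, Projectivization.mk_eq_mk_iff] at h
  obtain ⟨r, hr⟩ := h
  have h0 := congrFun hr 0
  have h1 := congrFun hr 1
  simp [Pv, Units.smul_def, Pi.smul_apply, smul_eq_mul, Matrix.vecHead, Matrix.vecTail] at h0 h1
  rw [h0, Units.val_one, one_mul] at h1
  have : ζ ^ (b:ℕ) = ζ ^ (a:ℕ) := mul_right_cancel₀ (ω_pow_ne c) h1
  exact (Fin.ext (hζ.pow_inj b.isLt a.isLt this)).symm

lemma encard_range_Ppt (c : ℕ) :
    (Set.range (fun a : Fin 7 => Ppt c (a : ℕ))).encard = 7 := by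
  rw [← Set.image_univ, Set.InjOn.encard_image (fun a _ b _ h => Ppt_inj c h),
    Set.encard_univ]
  rw [ENat.card_eq_coe_fintype_card, Fintype.card_fin]
  rfl

lemma orbit_Ppt_encard (c : ℕ) : (projOrbitSL T7 (Ppt c 0)).encard = 7 := by
  rw [orbit_Ppt]; exact encard_range_Ppt c

lemma Ppt_zero_mem_range {c c' : ℕ} (hc : c < 3) (hc' : c' < 3)
    (h : Ppt c 0 ∈ Set.range (fun a : Fin 7 => Ppt c' (a:ℕ))) : c = c' := by
  obtain ⟨a, ha'⟩ := h
  have ha : Ppt c' (a:ℕ) = Ppt c 0 := ha'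
  rw [Ppt, Ppt, Projectivization.mk_eq_mk_iff] at ha
  obtain ⟨r, hr⟩ := ha
  have h0 := congrFun hr 0
  have h1 := congrFun hr 1
  simp [Pv, Units.smul_def, Pi.smul_apply, smul_eq_mul, Matrix.vecHead, Matrix.vecTail] at h0 h1
  rw [h0, Units.val_one, one_mul] at h1
  -- h1 : ω ^ c = ζ ^ a * ω ^ c'
  have := seven_pow_trick (x := ζ^(a:ℕ)) (by rw [← pow_mul, mul_comm, pow_mul, ζ7, one_pow])
    (j := c') (k := c) h1.symm
  exact (hω.pow_inj hc' hc this).symm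

lemma orbit_Ppt_ne {c c' : ℕ} (hc : c < 3) (hc' : c' < 3) (hne : c ≠ c') :
    projOrbitSL T7 (Ppt c 0) ≠ projOrbitSL T7 (Ppt c' 0) := by
  intro h
  have h1 : Ppt c 0 ∈ projOrbitSL T7 (Ppt c' 0) := h ▸ mem_orbit_self
  rw [orbit_Ppt] at h1
  exact hne (Ppt_zero_mem_range hc hc' h1)

/-! ### `⟨D⟩`-orbits and general points -/

def DorbP (P : P2) : Set P2 := Set.range (fun a : Fin 7 => act (dsl ^ (a:ℕ)) P)

lemma act_dsl_mem_DorbP (n : ℕ) (P : P2) : act (dsl ^ n) P ∈ DorbP P :=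
  ⟨⟨n % 7, Nat.mod_lt _ (by norm_num)⟩, by simp only [← dsl_pow_mod]⟩

lemma mem_DorbP_self (P : P2) : P ∈ DorbP P :=
  ⟨0, by simp [act_one]⟩

lemma DorbP_eq_of_mem {P Q : P2} (h : Q ∈ DorbP P) : DorbP Q = DorbP P := by
  obtain ⟨a, rfl⟩ := h
  ext q
  constructor
  · rintro ⟨b, rfl⟩
    simp only [act_act, ← pow_add]
    exact act_dsl_mem_DorbP _ P
  · rintro ⟨b, rfl⟩
    have he : act (dsl ^ ((b:ℕ) + (7 - (a:ℕ)))) (act (dsl ^ (a:ℕ)) P)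
        = act (dsl ^ (b:ℕ)) P := by
      rw [act_act, ← pow_add]
      have h1 : (b:ℕ) + (7 - (a:ℕ)) + (a:ℕ) = (b:ℕ) + 7 := by
        have := a.isLt; omega
      rw [h1, pow_add, dsl7, mul_one]
    have hmem := act_dsl_mem_DorbP ((b:ℕ) + (7 - (a:ℕ))) (act (dsl ^ (a:ℕ)) P)
    rwa [he] at hmem

lemma DorbP_disjoint {P Q : P2} (h : Q ∉ DorbP P) : Disjoint (DorbP Q) (DorbP P) := by
  rw [Set.disjoint_left]
  rintro x ⟨a, rfl⟩ hxP
  apply h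
  have h1 : DorbP (act (dsl^((a : Fin 7):ℕ)) Q) = DorbP Q := DorbP_eq_of_mem ⟨a, rfl⟩
  have h2 : DorbP (act (dsl^((a : Fin 7):ℕ)) Q) = DorbP P := DorbP_eq_of_mem hxP
  rw [← h1.symm.trans h2]
  exact mem_DorbP_self Q

lemma DorbP_subset_orbit {X P : P2} (hP : P ∈ projOrbitSL T7 X) :
    DorbP P ⊆ projOrbitSL T7 X := by
  rintro q ⟨a, rfl⟩
  rw [← orbit_eq_of_mem hP]
  exact act_mem_orbit (pow_mem dsl_mem _)

lemma fin7_key : ∀ (i j : Fin 3) (a b : Fin 7), i ≠ j →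
    (m i * (a:ℕ) + m j * (b:ℕ)) % 7 = (m j * (a:ℕ) + m i * (b:ℕ)) % 7 → a = b := by decide

lemma pow_modeq {s t : ℕ} (h : ζ ^ s = ζ ^ t) : s % 7 = t % 7 := by
  rw [ζ_pow_mod s, ζ_pow_mod t] at h
  exact hζ.pow_inj (Nat.mod_lt _ (by norm_num)) (Nat.mod_lt _ (by norm_num)) h

lemma encard_DorbP {u : Fin 3 → ℂ} (hu : u ≠ 0) {i j : Fin 3} (hij : i ≠ j)
    (hi : u i ≠ 0) (hj : u j ≠ 0) :
    (DorbP (Projectivization.mk ℂ u hu)).encard = 7 := by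
  have hinj : ∀ a b : Fin 7,
      act (dsl^((a : Fin 7):ℕ)) (Projectivization.mk ℂ u hu)
        = act (dsl^((b : Fin 7):ℕ)) (Projectivization.mk ℂ u hu) → a = b := by
    intro a b hab
    rw [act_mk, act_mk] at hab
    rw [Projectivization.mk_eq_mk_iff] at hab
    obtain ⟨r, hr⟩ := hab
    rw [coe_dsl_pow, coe_dsl_pow] at hr
    have Ei := congrFun hr i
    have Ej := congrFun hr j
    rw [Pi.smul_apply, Dpow_apply, Dpow_apply, Units.smul_def, smul_eq_mul] at Ei Ej
    have gi : ζ ^ (m i * (a:ℕ)) = (r:ℂ) * ζ ^ (m i * (b:ℕ)) := by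
      apply mul_right_cancel₀ hi
      rw [← Ei]; ring
    have gj : ζ ^ (m j * (a:ℕ)) = (r:ℂ) * ζ ^ (m j * (b:ℕ)) := by
      apply mul_right_cancel₀ hj
      rw [← Ej]; ring
    have hcross : ζ ^ (m i * (a:ℕ) + m j * (b:ℕ)) = ζ ^ (m j * (a:ℕ) + m i * (b:ℕ)) := by
      rw [pow_add, pow_add, gi, gj]; ring
    exact fin7_key i j a b hij (pow_modeq hcross)
  rw [DorbP, ← Set.image_univ, Set.InjOn.encard_image (fun a _ b _ h => hinj a b h),
    Set.encard_univ]
  rw [ENat.card_eq_coe_fintype_card, Fintype.card_fin]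
  rfl

/-! ### part (i) : analysis of small orbits -/

lemma card_contra {A B O : Set P2} (hd : Disjoint A B) (hA : A.encard = 7) (hB : B.encard = 7)
    (hsub : A ∪ B ⊆ O) (hO : O.encard ≤ 8) : False := by
  have h1 : (A ∪ B).encard = 14 := by
    rw [Set.encard_union_eq hd, hA, hB]; rfl
  have h2 := (Set.encard_le_encard hsub).trans hO
  rw [h1] at h2
  have : ((14:ℕ) : ℕ∞) ≤ ((8:ℕ) : ℕ∞) := by exact_mod_cast h2
  rw [Nat.cast_le] at this
  omega

lemma τrep (X : P2) : act tsl X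
    = Projectivization.mk ℂ (Mtau.mulVec X.rep) (sl_mulVec_ne tsl X.rep_nonzero) := rfl

lemma orbit_large {X : P2} (hτ : act tsl X ∉ DorbP X)
    {i j : Fin 3} (hij : i ≠ j) (hi : X.rep i ≠ 0) (hj : X.rep j ≠ 0)
    {i' j' : Fin 3} (hij' : i' ≠ j')
    (hi' : (Mtau.mulVec X.rep) i' ≠ 0) (hj' : (Mtau.mulVec X.rep) j' ≠ 0)
    (hcard : (projOrbitSL T7 X).encard ≤ 8) : False := by
  have e1 : (DorbP X).encard = 7 := by
    have h := encard_DorbP X.rep_nonzero hij hi hj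
    rwa [X.mk_rep] at h
  have e2 : (DorbP (act tsl X)).encard = 7 := by
    rw [τrep]
    exact encard_DorbP _ hij' hi' hj'
  refine card_contra (DorbP_disjoint hτ) e2 e1 ?_ hcard
  apply Set.union_subset
  · exact DorbP_subset_orbit (act_mem_orbit tsl_mem)
  · exact DorbP_subset_orbit mem_orbit_self


/-! ### part (iii) : no three collinear -/

lemma lin_indep_Pv (c : ℕ) (a b d : Fin 7) (hab : a ≠ b) (had : a ≠ d) (hbd : b ≠ d) :
    LinearIndependent ℂ ![Pv c (a:ℕ), Pv c (b:ℕ), Pv c (d:ℕ)] := by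
  have hpow_ne : ∀ s t : Fin 7, s ≠ t → ζ^(s:ℕ) - ζ^(t:ℕ) ≠ 0 := by
    intro s t hst
    apply sub_ne_zero_of_ne
    intro h
    exact hst (Fin.ext (hζ.pow_inj s.isLt t.isLt h))
  have key : IsUnit (Matrix.of ![Pv c (a:ℕ), Pv c (b:ℕ), Pv c (d:ℕ)]) := by
    rw [Matrix.isUnit_iff_isUnit_det, isUnit_iff_ne_zero]
    have hdet : (Matrix.of ![Pv c (a:ℕ), Pv c (b:ℕ), Pv c (d:ℕ)]).det
        = (ζ^(b:ℕ) - ζ^(a:ℕ)) * ((ζ^(d:ℕ) - ζ^(a:ℕ)) * ((ζ^(d:ℕ) - ζ^(b:ℕ)) *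
            (ζ^(a:ℕ) + ζ^(b:ℕ) + ζ^(d:ℕ)))) := by
      rw [Matrix.det_fin_three]
      simp only [Matrix.of_apply, Matrix.cons_val', Matrix.cons_val_zero, Matrix.cons_val_one,
        Matrix.head_cons, Matrix.cons_val_two, Matrix.tail_cons, Matrix.head_fin_const,
        Matrix.empty_val', Matrix.cons_val_fin_one, Pv_apply0, Pv_apply1, Pv_apply2]
      linear_combination ((ζ^(b:ℕ) - ζ^(a:ℕ)) * ((ζ^(d:ℕ) - ζ^(a:ℕ)) * ((ζ^(d:ℕ) - ζ^(b:ℕ)) *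
        (ζ^(a:ℕ) + ζ^(b:ℕ) + ζ^(d:ℕ))))) * (ω_cube c)
    rw [hdet]
    exact mul_ne_zero (hpow_ne b a hab.symm) (mul_ne_zero (hpow_ne d a had.symm)
      (mul_ne_zero (hpow_ne d b hbd.symm) (sum_three_ne _ _ _)))
  exact Matrix.linearIndependent_rows_iff_isUnit.2 key

lemma noThreeCollinear_range (c : ℕ) :
    NoThreeCollinear (Set.range (fun a : Fin 7 => Ppt c (a:ℕ))) := by
  rintro p q r ⟨a, rfl⟩ ⟨b, rfl⟩ ⟨d, rfl⟩ hpq hpr hqr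
  have hab : a ≠ b := fun h => hpq (by rw [h])
  have had : a ≠ d := fun h => hpr (by rw [h])
  have hbd : b ≠ d := fun h => hqr (by rw [h])
  obtain ⟨u1, hu1⟩ := Projectivization.exists_smul_eq_mk_rep ℂ (Pv c (a:ℕ)) (Pv_ne c (a:ℕ))
  obtain ⟨u2, hu2⟩ := Projectivization.exists_smul_eq_mk_rep ℂ (Pv c (b:ℕ)) (Pv_ne c (b:ℕ))
  obtain ⟨u3, hu3⟩ := Projectivization.exists_smul_eq_mk_rep ℂ (Pv c (d:ℕ)) (Pv_ne c (d:ℕ))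
  have heq : ![(Ppt c (a:ℕ)).rep, (Ppt c (b:ℕ)).rep, (Ppt c (d:ℕ)).rep]
      = (![u1, u2, u3] : Fin 3 → ℂˣ) • ![Pv c (a:ℕ), Pv c (b:ℕ), Pv c (d:ℕ)] := by
    funext k
    fin_cases k <;> simp only [Pi.smul_apply', Matrix.cons_val_zero, Matrix.cons_val_one,
      Matrix.head_cons, Matrix.cons_val_two, Matrix.tail_cons]
    · exact hu1.symm
    · exact hu2.symm
    · exact hu3.symm
  rw [heq]
  exact (lin_indep_Pv c a b d hab had hbd).units_smul _

/-! ### conic machinery -/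

def bb : Fin 3 → (Fin 3 → ℂ) := ![![1,0,0], ![0,1,0], ![0,0,1]]

lemma vdecomp (x y z : ℂ) : (![x,y,z] : Fin 3 → ℂ) = x • bb 0 + y • bb 1 + z • bb 2 := by
  funext i
  fin_cases i <;> simp [bb]

lemma Qexp (Q : QuadraticForm ℂ (Fin 3 → ℂ)) (x y z : ℂ) :
    Q ![x,y,z] = x*x*(Q (bb 0)) + y*y*(Q (bb 1)) + z*z*(Q (bb 2))
      + x*y*(QuadraticMap.polar Q (bb 0) (bb 1))
      + x*z*(QuadraticMap.polar Q (bb 0) (bb 2))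
      + y*z*(QuadraticMap.polar Q (bb 1) (bb 2)) := by
  rw [vdecomp]
  rw [QuadraticMap.map_add Q, QuadraticMap.map_add Q, QuadraticMap.polar_add_left]
  rw [QuadraticMap.map_smul, QuadraticMap.map_smul, QuadraticMap.map_smul]
  rw [QuadraticMap.polar_smul_left, QuadraticMap.polar_smul_left, QuadraticMap.polar_smul_left,
    QuadraticMap.polar_smul_right, QuadraticMap.polar_smul_right, QuadraticMap.polar_smul_right]
  simp only [smul_eq_mul]
  ring

lemma orth (j k : Fin 7) :
    (∑ a : Fin 7, ζ^((a:ℕ)*(k:ℕ)) * (ζ^((a:ℕ)*(j:ℕ)))⁻¹)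
      = if j = k then (7:ℂ) else 0 := by
  have hterm : ∀ a : Fin 7, ζ^((a:ℕ)*(k:ℕ)) * (ζ^((a:ℕ)*(j:ℕ)))⁻¹
      = (ζ^(k:ℕ) * (ζ^(j:ℕ))⁻¹)^(a:ℕ) := by
    intro a
    rw [mul_pow, inv_pow, ← pow_mul, ← pow_mul, mul_comm (k:ℕ) (a:ℕ), mul_comm (j:ℕ) (a:ℕ)]
  simp_rw [hterm]
  rcases eq_or_ne j k with h | h
  · subst h
    rw [if_pos rfl]
    have h1 : ζ^(j:ℕ) * (ζ^(j:ℕ))⁻¹ = 1 := mul_inv_cancel₀ (ζ_pow_ne _)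
    rw [h1]
    simp
  · rw [if_neg h]
    set x := ζ^(k:ℕ) * (ζ^(j:ℕ))⁻¹ with hxd
    have hx7 : x ^ 7 = 1 := by
      rw [hxd, mul_pow, inv_pow, ← pow_mul, ← pow_mul, mul_comm (k:ℕ) 7, mul_comm (j:ℕ) 7,
        pow_mul, pow_mul, ζ7, one_pow, one_pow, inv_one, mul_one]
    have hx1 : x ≠ 1 := by
      intro hx1
      apply h
      have hkj : ζ^(k:ℕ) = ζ^(j:ℕ) := by
        rw [← div_eq_one_iff_eq (ζ_pow_ne (j:ℕ)), div_eq_mul_inv]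
        exact hx1
      exact (Fin.ext (hζ.pow_inj k.isLt j.isLt hkj)).symm
    rw [Fin.sum_univ_eq_sum_range (fun n => x ^ n) 7, geom_sum_eq hx1, hx7]
    simp

lemma dft (cf : Fin 7 → ℂ) (a₀ : Fin 7)
    (h : ∀ a : Fin 7, a ≠ a₀ → ∑ j : Fin 7, cf j * ζ^((a:ℕ)*(j:ℕ)) = 0)
    (h5 : cf 5 = 0) : ∀ j, cf j = 0 := by
  set t := ∑ k : Fin 7, cf k * ζ^((a₀:ℕ)*(k:ℕ)) with ht
  have key : ∀ j : Fin 7, 7 * cf j = t * (ζ^((a₀:ℕ)*(j:ℕ)))⁻¹ := by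
    intro j
    have hS : ∑ a : Fin 7, (ζ^((a:ℕ)*(j:ℕ)))⁻¹ * (∑ k : Fin 7, cf k * ζ^((a:ℕ)*(k:ℕ)))
        = t * (ζ^((a₀:ℕ)*(j:ℕ)))⁻¹ := by
      rw [Finset.sum_eq_single a₀]
      · rw [ht]; ring
      · intro b _ hb
        rw [h b hb, mul_zero]
      · intro hb
        exact absurd (Finset.mem_univ a₀) hb
    rw [← hS]
    refine Eq.symm ?_
    calc ∑ a : Fin 7, (ζ^((a:ℕ)*(j:ℕ)))⁻¹ * (∑ k : Fin 7, cf k * ζ^((a:ℕ)*(k:ℕ)))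
        = ∑ a : Fin 7, ∑ k : Fin 7, cf k * (ζ^((a:ℕ)*(k:ℕ)) * (ζ^((a:ℕ)*(j:ℕ)))⁻¹) := by
          refine Finset.sum_congr rfl fun a _ => ?_
          rw [Finset.mul_sum]
          refine Finset.sum_congr rfl fun k _ => ?_
          ring
      _ = ∑ k : Fin 7, ∑ a : Fin 7, cf k * (ζ^((a:ℕ)*(k:ℕ)) * (ζ^((a:ℕ)*(j:ℕ)))⁻¹) :=
          Finset.sum_comm
      _ = ∑ k : Fin 7, cf k * (∑ a : Fin 7, ζ^((a:ℕ)*(k:ℕ)) * (ζ^((a:ℕ)*(j:ℕ)))⁻¹) := by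
          refine Finset.sum_congr rfl fun k _ => ?_
          rw [Finset.mul_sum]
      _ = ∑ k : Fin 7, cf k * (if j = k then (7:ℂ) else 0) := by
          refine Finset.sum_congr rfl fun k _ => ?_
          rw [orth]
      _ = 7 * cf j := by
          simp only [mul_ite, mul_zero, Finset.sum_ite_eq, Finset.mem_univ, if_true]
          ring
  have ht0 : t = 0 := by
    have h5' := key 5
    rw [h5, mul_zero] at h5'
    rcases mul_eq_zero.1 h5'.symm with h' | h'
    · exact h'
    · exact absurd h' (inv_ne_zero (ζ_pow_ne _))
  intro j
  have hj := key j
  rw [ht0, zero_mul] at hj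
  rcases mul_eq_zero.1 hj with h' | h'
  · exact absurd h' (by norm_num)
  · exact h'

lemma rep_Ppt (c a : ℕ) : ∃ u : ℂˣ, (Ppt c a).rep = (u:ℂ) • Pv c a := by
  obtain ⟨u, hu⟩ := Projectivization.exists_smul_eq_mk_rep ℂ (Pv c a) (Pv_ne c a)
  exact ⟨u, by rw [Ppt, ← hu, Units.smul_def]⟩

lemma no_conic (c : ℕ) : ∀ S ⊆ Set.range (fun a : Fin 7 => Ppt c (a:ℕ)),
    S.encard = 6 → ¬ LiesOnConic S := by
  intro S hS h6 ⟨Q, hQne, hQ0⟩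
  set O := Set.range (fun a : Fin 7 => Ppt c (a:ℕ)) with hO
  -- find the missing point
  have hdiff : (O \ S).encard = 1 := by
    have := Set.encard_diff_add_encard_of_subset hS
    rw [h6, encard_range_Ppt c] at this
    have h7 : (O \ S).encard + 6 = 1 + 6 := by rw [this]; rfl
    exact WithTop.add_right_cancel (by decide) h7
  obtain ⟨x, hx⟩ := Set.encard_eq_one.1 hdiff
  have hxO : x ∈ O := ((hx ▸ (Set.diff_subset (s := O) (t := S))) rfl)
  obtain ⟨a₀, ha₀⟩ := hxO
  have hmem : ∀ a : Fin 7, a ≠ a₀ → Ppt c (a:ℕ) ∈ S := by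
    intro a ha
    by_contra hnot
    have : Ppt c (a:ℕ) ∈ O \ S := ⟨⟨a, rfl⟩, hnot⟩
    rw [hx, Set.mem_singleton_iff, ← ha₀] at this
    exact ha (Ppt_inj c this)
  -- Q vanishes on Pv c a for a ≠ a₀
  have hvan : ∀ a : Fin 7, a ≠ a₀ → Q (Pv c (a:ℕ)) = 0 := by
    intro a ha
    obtain ⟨u, hu⟩ := rep_Ppt c (a:ℕ)
    have h0 : Q ((Ppt c (a:ℕ)).rep) = 0 := hQ0 _ (hmem a ha)
    rw [hu, QuadraticMap.map_smul, smul_eq_mul] at h0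
    rcases mul_eq_zero.1 h0 with h | h
    · exact absurd h (by simp [u.ne_zero])
    · exact h
  set w := ω ^ c with hw
  set cf : Fin 7 → ℂ := ![Q (bb 0), QuadraticMap.polar Q (bb 0) (bb 1) * w,
    Q (bb 1) * w^2, QuadraticMap.polar Q (bb 0) (bb 2) * w^2,
    QuadraticMap.polar Q (bb 1) (bb 2), 0, Q (bb 2) * w] with hcf
  have hQval : ∀ a : ℕ, Q (Pv c a) = ∑ j : Fin 7, cf j * ζ^(a*(j:ℕ)) := by
    intro a
    rw [show Pv c a = ![1, ζ^a * ω^c, ζ^(3*a) * ω^(2*c)] from rfl, Qexp]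
    rw [Fin.sum_univ_seven]
    rw [show cf 0 = Q (bb 0) from rfl,
      show cf 1 = QuadraticMap.polar Q (bb 0) (bb 1) * w from rfl,
      show cf 2 = Q (bb 1) * w^2 from rfl,
      show cf 3 = QuadraticMap.polar Q (bb 0) (bb 2) * w^2 from rfl,
      show cf 4 = QuadraticMap.polar Q (bb 1) (bb 2) from rfl,
      show cf 5 = 0 from rfl,
      show cf 6 = Q (bb 2) * w from rfl]
    rw [show ((0:Fin 7):ℕ) = 0 from rfl, show ((1:Fin 7):ℕ) = 1 from rfl,
      show ((2:Fin 7):ℕ) = 2 from rfl, show ((3:Fin 7):ℕ) = 3 from rfl,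
      show ((4:Fin 7):ℕ) = 4 from rfl, show ((5:Fin 7):ℕ) = 5 from rfl,
      show ((6:Fin 7):ℕ) = 6 from rfl]
    rw [hw]
    linear_combination (Q (bb 2) * ζ^(a*6) * (ω^c) + QuadraticMap.polar Q (bb 1) (bb 2) * ζ^(a*4))
      * (ω_cube c)
  have hzero : ∀ j, cf j = 0 := by
    apply dft cf a₀
    · intro a ha
      rw [← hQval (a:ℕ)]
      exact hvan a ha
    · rfl
  have hwne : w ≠ 0 := ω_pow_ne c
  have c0 : Q (bb 0) = 0 := hzero 0
  have c1 : QuadraticMap.polar Q (bb 0) (bb 1) * w = 0 := hzero 1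
  have c2 : Q (bb 1) * w^2 = 0 := hzero 2
  have c3 : QuadraticMap.polar Q (bb 0) (bb 2) * w^2 = 0 := hzero 3
  have c4 : QuadraticMap.polar Q (bb 1) (bb 2) = 0 := hzero 4
  have c6 : Q (bb 2) * w = 0 := hzero 6
  have q0 : Q (bb 0) = 0 := c0
  have q1 : Q (bb 1) = 0 := by
    rcases mul_eq_zero.1 c2 with h | h
    · exact h
    · exact absurd h (pow_ne_zero _ hwne)
  have q2 : Q (bb 2) = 0 := by
    rcases mul_eq_zero.1 c6 with h | h
    · exact h
    · exact absurd h hwne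
  have p01 : QuadraticMap.polar Q (bb 0) (bb 1) = 0 := by
    rcases mul_eq_zero.1 c1 with h | h
    · exact h
    · exact absurd h hwne
  have p02 : QuadraticMap.polar Q (bb 0) (bb 2) = 0 := by
    rcases mul_eq_zero.1 c3 with h | h
    · exact h
    · exact absurd h (pow_ne_zero _ hwne)
  have p12 : QuadraticMap.polar Q (bb 1) (bb 2) = 0 := c4
  apply hQne
  apply QuadraticMap.ext
  intro v
  rw [vec3_eta v, Qexp, q0, q1, q2, p01, p02, p12]
  simp

lemma act_eq_mk (g : SL3) (X : P2) :
    act g X = Projectivization.mk ℂ ((g : M3).mulVec X.rep) (sl_mulVec_ne g X.rep_nonzero) := rfl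

lemma coe_tsl : ((tsl : SL3) : M3) = Mtau := rfl

lemma tau_in_Dorb_eqns {X : P2} (h : act tsl X ∈ DorbP X) :
    ∃ (a : ℕ) (r : ℂˣ), (r:ℂ) * X.rep 1 = ζ^a * X.rep 0
      ∧ (r:ℂ) * X.rep 2 = ζ^(2*a) * X.rep 1
      ∧ (r:ℂ) * X.rep 0 = ζ^(4*a) * X.rep 2 := by
  obtain ⟨a, ha'⟩ := h
  have ha : act (dsl ^ ((a : Fin 7):ℕ)) X = act tsl X := ha'
  rw [act_eq_mk, act_eq_mk, Projectivization.mk_eq_mk_iff] at ha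
  obtain ⟨r, hr⟩ := ha
  rw [coe_dsl_pow, coe_tsl, Mtau_mulVec] at hr
  have E : ∀ k : Fin 3, (r:ℂ) * ((![X.rep 1, X.rep 2, X.rep 0] : Fin 3 → ℂ) k)
      = ζ^(m k * (a:ℕ)) * X.rep k := by
    intro k
    have hk := congrFun hr k
    rwa [Pi.smul_apply, Units.smul_def, smul_eq_mul, Dpow_apply] at hk
  refine ⟨(a:ℕ), r, ?_, ?_, ?_⟩
  · have := E 0; simpa [m] using this
  · have := E 1; simpa [m] using this
  · have := E 2; simpa [m] using this

lemma part1 (X : P2)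
    (h1 : ¬ (X.rep 1 = 0 ∧ X.rep 2 = 0))
    (h2 : ¬ (X.rep 0 = 0 ∧ X.rep 2 = 0))
    (h3 : ¬ (X.rep 0 = 0 ∧ X.rep 1 = 0))
    (hcard : (projOrbitSL T7 X).encard ≤ 8) :
    ∃ c : Fin 3, projOrbitSL T7 X = projOrbitSL T7 (Ppt (c:ℕ) 0) := by
  have hMv : Mtau.mulVec X.rep = ![X.rep 1, X.rep 2, X.rep 0] := Mtau_mulVec X.rep
  by_cases hτ : act tsl X ∈ DorbP X
  · -- small case: extract the structure
    obtain ⟨a, r, E0, E1, E2⟩ := tau_in_Dorb_eqns hτ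
    -- all coordinates are nonzero
    have hall : X.rep 0 ≠ 0 ∧ X.rep 1 ≠ 0 ∧ X.rep 2 ≠ 0 := by
      have hrne : (r:ℂ) ≠ 0 := r.ne_zero
      by_cases h0 : X.rep 0 = 0
      · have hv1 : X.rep 1 = 0 := by
          have := E0; rw [h0, mul_zero] at this
          exact (mul_eq_zero.1 this).resolve_left hrne
        exact absurd ⟨h0, hv1⟩ h3
      by_cases hv1 : X.rep 1 = 0
      · have hv2 : X.rep 2 = 0 := by
          have := E1; rw [hv1, mul_zero] at this
          exact (mul_eq_zero.1 this).resolve_left hrne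
        exact absurd ⟨hv1, hv2⟩ h1
      by_cases hv2 : X.rep 2 = 0
      · have h0' : X.rep 0 = 0 := by
          have := E2; rw [hv2, mul_zero] at this
          exact (mul_eq_zero.1 this).resolve_left hrne
        exact absurd ⟨h0', hv2⟩ h2
      exact ⟨h0, hv1, hv2⟩
    obtain ⟨hv0, hv1, hv2⟩ := hall
    have hrne : (r:ℂ) ≠ 0 := r.ne_zero
    -- R^3 = 1
    have hR3 : ((r:ℂ))^3 = 1 := by
      have hprod : ((r:ℂ))^3 * (X.rep 0 * X.rep 1 * X.rep 2)
          = ζ^(7*a) * (X.rep 0 * X.rep 1 * X.rep 2) := by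
        calc ((r:ℂ))^3 * (X.rep 0 * X.rep 1 * X.rep 2)
            = ((r:ℂ) * X.rep 1) * (((r:ℂ) * X.rep 2) * ((r:ℂ) * X.rep 0)) := by ring
          _ = (ζ^a * X.rep 0) * ((ζ^(2*a) * X.rep 1) * (ζ^(4*a) * X.rep 2)) := by
              rw [E0, E1, E2]
          _ = ζ^(7*a) * (X.rep 0 * X.rep 1 * X.rep 2) := by ring
      rw [pow_mul, ζ7, one_pow, one_mul] at hprod
      have hprod' : ((r:ℂ))^3 * (X.rep 0 * X.rep 1 * X.rep 2)
          = 1 * (X.rep 0 * X.rep 1 * X.rep 2) := by rw [one_mul]; exact hprod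
      exact mul_right_cancel₀ (mul_ne_zero (mul_ne_zero hv0 hv1) hv2) hprod'
    set s : ℂ := ((r:ℂ))⁻¹ with hs
    have hRs : (r:ℂ) * s = 1 := mul_inv_cancel₀ hrne
    have hs3 : s^3 = 1 := by
      rw [hs, inv_pow, hR3, inv_one]
    obtain ⟨c, hc⟩ := cube_roots hs3
    refine ⟨c, ?_⟩
    have hX : X = Ppt (c:ℕ) a := by
      have hveq : X.rep = (X.rep 0) • Pv (c:ℕ) a := by
        have comp1 : X.rep 1 = X.rep 0 * (ζ^a * ω^(c:ℕ)) := by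
          rw [← hc]
          linear_combination (-(X.rep 1)) * hRs + s * E0
        have comp2 : X.rep 2 = X.rep 0 * (ζ^(3*a) * ω^(2*(c:ℕ))) := by
          have hc2 : ω^(2*(c:ℕ)) = s^2 := by rw [hc, ← pow_mul, mul_comm (c:ℕ) 2]
          rw [hc2]
          linear_combination (-(X.rep 2) - s * ζ^(2*a) * (X.rep 1)) * hRs
            + s * E1 + s^2 * ζ^(2*a) * E0
        show X.rep = (X.rep 0) • ![1, ζ^a * ω^(c:ℕ), ζ^(3*a) * ω^(2*(c:ℕ))]
        rw [smul3, mul_one, ← comp1, ← comp2]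
        exact vec3_eta X.rep
      calc X = Projectivization.mk ℂ X.rep X.rep_nonzero := X.mk_rep.symm
        _ = Projectivization.mk ℂ ((X.rep 0) • Pv (c:ℕ) a)
              (smul_ne_zero hv0 (Pv_ne (c:ℕ) a)) := mk_congr _ _ hveq
        _ = Ppt (c:ℕ) a := mk_smul_eq _ _ hv0
    have hmem : X ∈ projOrbitSL T7 (Ppt (c:ℕ) 0) := by
      rw [hX, orbit_Ppt]
      exact ⟨⟨a % 7, Nat.mod_lt _ (by norm_num)⟩, (Ppt_mod (c:ℕ) a).symm⟩
    exact orbit_eq_of_mem hmem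
  · -- big orbit: contradiction
    exfalso
    by_cases h0 : X.rep 0 = 0
    · have hv1 : X.rep 1 ≠ 0 := fun h => h3 ⟨h0, h⟩
      have hv2 : X.rep 2 ≠ 0 := fun h => h2 ⟨h0, h⟩
      refine orbit_large hτ (i := 1) (j := 2) (by decide) hv1 hv2
        (i' := 0) (j' := 1) (by decide) ?_ ?_ hcard
      · rw [hMv]; simpa using hv1
      · rw [hMv]; simpa using hv2
    by_cases hv1 : X.rep 1 = 0
    · have hv2 : X.rep 2 ≠ 0 := fun h => h1 ⟨hv1, h⟩
      have hv0 : X.rep 0 ≠ 0 := h0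
      refine orbit_large hτ (i := 0) (j := 2) (by decide) hv0 hv2
        (i' := 1) (j' := 2) (by decide) ?_ ?_ hcard
      · rw [hMv]; simpa using hv2
      · rw [hMv]; simpa using hv0
    by_cases hv2 : X.rep 2 = 0
    · have hv0 : X.rep 0 ≠ 0 := h0
      refine orbit_large hτ (i := 0) (j := 1) (by decide) hv0 hv1
        (i' := 0) (j' := 2) (by decide) ?_ ?_ hcard
      · rw [hMv]; simpa using hv1
      · rw [hMv]; simpa using hv0
    · refine orbit_large hτ (i := 0) (j := 1) (by decide) h0 hv1
        (i' := 0) (j' := 1) (by decide) ?_ ?_ hcard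
      · rw [hMv]; simpa using hv1
      · rw [hMv]; simpa using hv2

lemma ω4 : ω ^ 4 = ω := by rw [pow_succ, ω3, one_mul]

lemma eq_coord0 (X : P2) (ha : X.rep 1 = 0) (hb : X.rep 2 = 0) :
    X = pt 1 0 0 (vne₀ one_ne_zero) := by
  have hv0 : X.rep 0 ≠ 0 := by
    intro h0
    apply X.rep_nonzero
    rw [vec3_eta X.rep, h0, ha, hb]
    funext i; fin_cases i <;> rfl
  calc X = Projectivization.mk ℂ X.rep X.rep_nonzero := X.mk_rep.symm
    _ = pt 1 0 0 (vne₀ one_ne_zero) := by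
        rw [pt]
        apply (Projectivization.mk_eq_mk_iff ℂ _ _ _ _).2
        refine ⟨Units.mk0 (X.rep 0) hv0, ?_⟩
        funext i
        fin_cases i <;>
          simp [Units.smul_def, smul3, Fin.zero_eta, Fin.mk_one, ha, hb]

lemma eq_coord1 (X : P2) (ha : X.rep 0 = 0) (hb : X.rep 2 = 0) :
    X = pt 0 1 0 (vne₁ one_ne_zero) := by
  have hv1 : X.rep 1 ≠ 0 := by
    intro h0
    apply X.rep_nonzero
    rw [vec3_eta X.rep, h0, ha, hb]
    funext i; fin_cases i <;> rfl
  calc X = Projectivization.mk ℂ X.rep X.rep_nonzero := X.mk_rep.symm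
    _ = pt 0 1 0 (vne₁ one_ne_zero) := by
        rw [pt]
        apply (Projectivization.mk_eq_mk_iff ℂ _ _ _ _).2
        refine ⟨Units.mk0 (X.rep 1) hv1, ?_⟩
        funext i
        fin_cases i <;>
          simp [Units.smul_def, smul3, Fin.zero_eta, Fin.mk_one, ha, hb]

lemma eq_coord2 (X : P2) (ha : X.rep 0 = 0) (hb : X.rep 1 = 0) :
    X = pt 0 0 1 (vne₂ one_ne_zero) := by
  have hv2 : X.rep 2 ≠ 0 := by
    intro h0
    apply X.rep_nonzero
    rw [vec3_eta X.rep, h0, ha, hb]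
    funext i; fin_cases i <;> rfl
  calc X = Projectivization.mk ℂ X.rep X.rep_nonzero := X.mk_rep.symm
    _ = pt 0 0 1 (vne₂ one_ne_zero) := by
        rw [pt]
        apply (Projectivization.mk_eq_mk_iff ℂ _ _ _ _).2
        refine ⟨Units.mk0 (X.rep 2) hv2, ?_⟩
        funext i
        fin_cases i <;>
          simp [Units.smul_def, smul3, Fin.zero_eta, Fin.mk_one, ha, hb]

lemma pt_eq_Ppt (c : ℕ) :
    pt 1 (zeta 3 ^ c) (zeta 3 ^ (2*c)) (vne₀ one_ne_zero) = Ppt c 0 := by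
  apply mk_congr
  funext i
  fin_cases i <;> simp [Pv, ω]

lemma pt111_eq : pt 1 1 1 (vne₀ one_ne_zero) = Ppt 0 0 := by
  apply mk_congr
  funext i
  fin_cases i <;> simp [Pv, ω]

lemma ptω_eq : pt 1 (zeta 3) (zeta 3 ^ 2) (vne₀ one_ne_zero) = Ppt 1 0 := by
  apply mk_congr
  funext i
  fin_cases i <;> simp [Pv, ω]

lemma ptω2_eq : pt 1 (zeta 3 ^ 2) (zeta 3) (vne₀ one_ne_zero) = Ppt 2 0 := by
  apply mk_congr
  funext i
  fin_cases i <;> norm_num [Pv, ω]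
  exact ω4.symm

end S5

open S5 in
/-- for the group `T = ⟨diag(ζ₇,ζ₇²,ζ₇⁴), M_τ⟩ ≤ SL(3,ℂ)`:
(i) every point other than the coordinate points whose `T`-orbit has at most 8 elements has
an orbit with exactly 7 elements containing some `[1:ζ₃^c:ζ₃^{2c}]`;
(ii) `[1:1:1]`, `[1:ζ₃:ζ₃²]`, `[1:ζ₃²:ζ₃]` lie in three pairwise distinct `T`-orbits of size 7;
(iii) each of these orbits has no three collinear points and no six of its points lie on a conic. -/
theorem statement5 :
    (∀ X : P2,
        X ≠ pt 1 0 0 (vne₀ one_ne_zero) → X ≠ pt 0 1 0 (vne₁ one_ne_zero) →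
        X ≠ pt 0 0 1 (vne₂ one_ne_zero) →
        (projOrbitSL T7 X).encard ≤ 8 →
        (projOrbitSL T7 X).encard = 7 ∧
          ∃ c : Fin 3, pt 1 (zeta 3 ^ (c : ℕ)) (zeta 3 ^ (2 * (c : ℕ))) (vne₀ one_ne_zero)
            ∈ projOrbitSL T7 X) ∧
    (projOrbitSL T7 (pt 1 1 1 (vne₀ one_ne_zero)) ≠
        projOrbitSL T7 (pt 1 (zeta 3) (zeta 3 ^ 2) (vne₀ one_ne_zero)) ∧
      projOrbitSL T7 (pt 1 1 1 (vne₀ one_ne_zero)) ≠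
        projOrbitSL T7 (pt 1 (zeta 3 ^ 2) (zeta 3) (vne₀ one_ne_zero)) ∧
      projOrbitSL T7 (pt 1 (zeta 3) (zeta 3 ^ 2) (vne₀ one_ne_zero)) ≠
        projOrbitSL T7 (pt 1 (zeta 3 ^ 2) (zeta 3) (vne₀ one_ne_zero)) ∧
      (projOrbitSL T7 (pt 1 1 1 (vne₀ one_ne_zero))).encard = 7 ∧
      (projOrbitSL T7 (pt 1 (zeta 3) (zeta 3 ^ 2) (vne₀ one_ne_zero))).encard = 7 ∧
      (projOrbitSL T7 (pt 1 (zeta 3 ^ 2) (zeta 3) (vne₀ one_ne_zero))).encard = 7) ∧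
    (∀ O : Set P2,
        (O = projOrbitSL T7 (pt 1 1 1 (vne₀ one_ne_zero)) ∨
         O = projOrbitSL T7 (pt 1 (zeta 3) (zeta 3 ^ 2) (vne₀ one_ne_zero)) ∨
         O = projOrbitSL T7 (pt 1 (zeta 3 ^ 2) (zeta 3) (vne₀ one_ne_zero))) →
        NoThreeCollinear O ∧ ∀ S ⊆ O, S.encard = 6 → ¬ LiesOnConic S) := by
  refine ⟨?_, ?_, ?_⟩
  · -- part (i)
    intro X hA hB hC hcard
    have hc1 : ¬ (X.rep 1 = 0 ∧ X.rep 2 = 0) := fun ⟨a, b⟩ => hA (eq_coord0 X a b)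
    have hc2 : ¬ (X.rep 0 = 0 ∧ X.rep 2 = 0) := fun ⟨a, b⟩ => hB (eq_coord1 X a b)
    have hc3 : ¬ (X.rep 0 = 0 ∧ X.rep 1 = 0) := fun ⟨a, b⟩ => hC (eq_coord2 X a b)
    obtain ⟨c, hoc⟩ := part1 X hc1 hc2 hc3 hcard
    constructor
    · rw [hoc]; exact orbit_Ppt_encard _
    · refine ⟨c, ?_⟩
      rw [pt_eq_Ppt (c:ℕ), hoc]
      exact mem_orbit_self
  · -- part (ii)
    rw [pt111_eq, ptω_eq, ptω2_eq]
    exact ⟨orbit_Ppt_ne (by norm_num) (by norm_num) (by norm_num),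
      orbit_Ppt_ne (by norm_num) (by norm_num) (by norm_num),
      orbit_Ppt_ne (by norm_num) (by norm_num) (by norm_num),
      orbit_Ppt_encard 0, orbit_Ppt_encard 1, orbit_Ppt_encard 2⟩
  · -- part (iii)
    intro O hO
    rcases hO with h | h | h
    · rw [h, pt111_eq, orbit_Ppt]
      exact ⟨noThreeCollinear_range 0, no_conic 0⟩
    · rw [h, ptω_eq, orbit_Ppt]
      exact ⟨noThreeCollinear_range 1, no_conic 1⟩
    · rw [h, ptω2_eq, orbit_Ppt]
      exact ⟨noThreeCollinear_range 2, no_conic 2⟩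
end
end

section
/- Let T ≤ SL(3,ℂ) be the subgroup generated by diag(1,-1,-1), diag(-1,1,-1), M_τ, and let ω = ζ₃. Then the T-orbits on ℙ² of the points [1:1:1], [1:ω:ω²], [1:ω²:ω] each have exactly 4 elements and are pairwise distinct; no three points of any one of these orbits are collinear; and every point of ℙ² whose T-orbit has exactly 4 elements belongs to one of these three orbits. -/
open Matrix Complex

noncomputable section

/-- The subgroup of `SL(3,ℂ)` generated by `diag(1,-1,-1)`, `diag(-1,1,-1)` and `M_τ`. -/
def TA4 : Subgroup SL3 :=
  genSL {Matrix.diagonal ![1, -1, -1], Matrix.diagonal ![-1, 1, -1], Mtau}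

/-- The three points `[1:1:1]`, `[1:ω:ω²]`, `[1:ω²:ω]` (with `ω = ζ₃`). -/
def q₁ : P2 := pt 1 1 1 (vne₀ one_ne_zero)
def q₂ : P2 := pt 1 (zeta 3) (zeta 3 ^ 2) (vne₀ one_ne_zero)
def q₃ : P2 := pt 1 (zeta 3 ^ 2) (zeta 3) (vne₀ one_ne_zero)

-- ===== omega facts =====
lemma zeta3_prim : IsPrimitiveRoot (zeta 3) 3 := by
  have := Complex.isPrimitiveRoot_exp 3 (by norm_num)
  simpa [zeta] using this

lemma w3 : zeta 3 ^ 3 = 1 := zeta3_prim.pow_eq_one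
lemma w_ne_zero : zeta 3 ≠ 0 := zeta3_prim.ne_zero (by norm_num)
lemma w_ne_one : zeta 3 ≠ 1 := zeta3_prim.ne_one (by norm_num)
lemma w_ne_neg_one : zeta 3 ≠ -1 := by
  intro h
  have := w3
  rw [h] at this
  norm_num at this
lemma w_sq_ne_one : zeta 3 ^ 2 ≠ 1 := by
  intro h
  apply w_ne_one
  have h2 : zeta 3 = zeta 3 * zeta 3 ^ 2 := by rw [h, mul_one]
  rw [show zeta 3 * zeta 3 ^ 2 = zeta 3 ^ 3 by ring, w3] at h2
  exact h2
lemma w_sq_ne_neg_one : zeta 3 ^ 2 ≠ -1 := by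
  intro h
  apply w_ne_one
  have h4 : (zeta 3 ^ 2) ^ 2 = 1 := by rw [h]; norm_num
  linear_combination h4 - zeta 3 * w3
lemma w_sq_ne_zero : zeta 3 ^ 2 ≠ 0 := pow_ne_zero _ w_ne_zero
lemma w_sq_add : zeta 3 ^ 2 + zeta 3 + 1 = 0 := by
  have h1 : zeta 3 - 1 ≠ 0 := sub_ne_zero.mpr w_ne_one
  have key : (zeta 3 - 1) * (zeta 3 ^ 2 + zeta 3 + 1) = 0 := by
    linear_combination w3
  exact (mul_eq_zero.mp key).resolve_left h1
lemma w_ne_w_sq : zeta 3 ≠ zeta 3 ^ 2 := by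
  intro h
  apply w_sq_ne_one
  linear_combination w3 + zeta 3 * h
lemma cube_root_cases {c : ℂ} (h : c ^ 3 = 1) : c = 1 ∨ c = zeta 3 ∨ c = zeta 3 ^ 2 := by
  have key : (c - 1) * (c - zeta 3) * (c - zeta 3 ^ 2) = 0 := by
    linear_combination h + (c - c^2) * w_sq_add + (c - 1) * w3
  rcases mul_eq_zero.mp key with h' | h'
  · rcases mul_eq_zero.mp h' with h'' | h''
    · exact Or.inl (sub_eq_zero.mp h'')
    · exact Or.inr (Or.inl (sub_eq_zero.mp h''))
  · exact Or.inr (Or.inr (sub_eq_zero.mp h'))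

-- ===== mk helpers =====
lemma mk_eq_of {v w : Fin 3 → ℂ} (hv : v ≠ 0) (hw : w ≠ 0) (a : ℂ) (h : a • w = v) :
    Projectivization.mk ℂ v hv = Projectivization.mk ℂ w hw :=
  (Projectivization.mk_eq_mk_iff' ℂ v w hv hw).mpr ⟨a, h⟩

lemma smul_comps {a x y z u v w : ℂ} (h : a • ![u,v,w] = ![x,y,z]) :
    a * u = x ∧ a * v = y ∧ a * w = z := by
  refine ⟨?_, ?_, ?_⟩
  · simpa using congrFun h 0
  · simpa using congrFun h 1
  · simpa using congrFun h 2

lemma mk_one_eq {y z v w : ℂ} {h₁ : ![1,y,z] ≠ 0} {h₂ : ![(1:ℂ),v,w] ≠ 0}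
    (h : Projectivization.mk ℂ ![1,y,z] h₁ = Projectivization.mk ℂ ![1,v,w] h₂) :
    y = v ∧ z = w := by
  rw [Projectivization.mk_eq_mk_iff'] at h
  obtain ⟨c, hc⟩ := h
  obtain ⟨e0, e1, e2⟩ := smul_comps hc
  rw [mul_one] at e0
  subst e0
  rw [one_mul] at e1 e2
  exact ⟨e1.symm, e2.symm⟩

-- ===== group elements =====
def gσ₁ : SL3 := ⟨Matrix.diagonal ![1,-1,-1], by
  simp [Matrix.det_diagonal, Fin.prod_univ_three]⟩
def gσ₂ : SL3 := ⟨Matrix.diagonal ![-1,1,-1], by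
  simp [Matrix.det_diagonal, Fin.prod_univ_three]⟩
def gτ : SL3 := ⟨Mtau, by simp [Mtau, Matrix.det_fin_three]⟩

lemma gσ₁_mem : gσ₁ ∈ TA4 := Subgroup.subset_closure (by left; rfl)
lemma gσ₂_mem : gσ₂ ∈ TA4 := Subgroup.subset_closure (by right; left; rfl)
lemma gτ_mem : gτ ∈ TA4 := Subgroup.subset_closure (by right; right; rfl)

-- ===== the action =====
lemma sl_mulVec_ne (g : SL3) {v : Fin 3 → ℂ} (hv : v ≠ 0) : (g : M3).mulVec v ≠ 0 := by
  intro h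
  apply hv
  have hinj : Function.Injective (g : M3).mulVec :=
    Matrix.mulVec_injective_iff_isUnit.mpr
      ((Matrix.isUnit_iff_isUnit_det _).mpr (by simp))
  apply hinj
  simpa using h

def act (g : SL3) (p : P2) : P2 :=
  Projectivization.mk ℂ ((g : M3).mulVec p.rep) (sl_mulVec_ne g p.rep_nonzero)

lemma act_mk (g : SL3) {v : Fin 3 → ℂ} (hv : v ≠ 0) :
    act g (Projectivization.mk ℂ v hv) =
      Projectivization.mk ℂ ((g : M3).mulVec v) (sl_mulVec_ne g hv) := by
  obtain ⟨a, ha⟩ := Projectivization.exists_smul_eq_mk_rep ℂ v hv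
  unfold act
  rw [Projectivization.mk_eq_mk_iff]
  refine ⟨a, ?_⟩
  rw [← ha]
  rw [Matrix.mulVec_smul]

lemma act_one (p : P2) : act 1 p = p := by
  unfold act
  have : ((1 : SL3) : M3).mulVec p.rep = p.rep := by simp
  simp_rw [this]
  exact Projectivization.mk_rep p

lemma act_mul (g h : SL3) (p : P2) : act (g * h) p = act g (act h p) := by
  have h2 : act g (act h p) =
      Projectivization.mk ℂ ((g : M3).mulVec ((h : M3).mulVec p.rep))
        (sl_mulVec_ne g (sl_mulVec_ne h p.rep_nonzero)) := act_mk g _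
  rw [h2]
  unfold act
  apply mk_eq_of _ _ 1
  rw [one_smul, Matrix.mulVec_mulVec]
  simp

lemma act_injective (g : SL3) : Function.Injective (act g) := by
  intro p q h
  unfold act at h
  rw [Projectivization.mk_eq_mk_iff'] at h
  obtain ⟨a, ha⟩ := h
  rw [← Matrix.mulVec_smul] at ha
  have hinj : Function.Injective (g : M3).mulVec :=
    Matrix.mulVec_injective_iff_isUnit.mpr
      ((Matrix.isUnit_iff_isUnit_det _).mpr (by simp))
  have h2 : a • q.rep = p.rep := hinj ha
  have h3 : Projectivization.mk ℂ p.rep p.rep_nonzero =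
      Projectivization.mk ℂ q.rep q.rep_nonzero :=
    (Projectivization.mk_eq_mk_iff' ℂ _ _ _ _).mpr ⟨a, h2⟩
  rwa [Projectivization.mk_rep, Projectivization.mk_rep] at h3

lemma mem_orbit_iff {G : Subgroup SL3} {p q : P2} :
    q ∈ projOrbitSL G p ↔ ∃ g ∈ G, act g p = q := by
  constructor
  · rintro ⟨A, ⟨g, hg, rfl⟩, h, rfl⟩
    exact ⟨g, hg, rfl⟩
  · rintro ⟨g, hg, rfl⟩
    exact ⟨(g : M3), ⟨g, hg, rfl⟩, sl_mulVec_ne g p.rep_nonzero, rfl⟩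

lemma self_mem_orbit (G : Subgroup SL3) (p : P2) : p ∈ projOrbitSL G p :=
  mem_orbit_iff.mpr ⟨1, one_mem _, act_one p⟩

lemma act_mem_orbit {G : Subgroup SL3} {g : SL3} (hg : g ∈ G) (p : P2) :
    act g p ∈ projOrbitSL G p :=
  mem_orbit_iff.mpr ⟨g, hg, rfl⟩

lemma orbit_act_eq {G : Subgroup SL3} {g : SL3} (hg : g ∈ G) (p : P2) :
    projOrbitSL G (act g p) = projOrbitSL G p := by
  ext q
  rw [mem_orbit_iff, mem_orbit_iff]
  constructor
  · rintro ⟨h, hh, rfl⟩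
    exact ⟨h * g, mul_mem hh hg, act_mul h g p⟩
  · rintro ⟨h, hh, rfl⟩
    refine ⟨h * g⁻¹, mul_mem hh (inv_mem hg), ?_⟩
    rw [act_mul, ← act_mul g⁻¹ g p, inv_mul_cancel, act_one]

lemma orbit_subset {gens : Set M3} {p : P2} {S : Set P2} (hfin : S.Finite) (hp : p ∈ S)
    (hgen : ∀ g : SL3, (g : M3) ∈ gens → ∀ q ∈ S, act g q ∈ S) :
    projOrbitSL (genSL gens) p ⊆ S := by
  intro q hq
  rw [mem_orbit_iff] at hq
  obtain ⟨g, hg, rfl⟩ := hq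
  have key : ∀ q ∈ S, act g q ∈ S := by
    unfold genSL at hg
    induction hg using Subgroup.closure_induction with
    | mem x hx => exact hgen x hx
    | one => intro q hq; rwa [act_one]
    | mul x y hx hy ihx ihy =>
      intro q hq
      rw [act_mul]
      exact ihx _ (ihy _ hq)
    | inv x hx ih =>
      intro q hq
      have hmaps : Set.MapsTo (act x) S S := ih
      have hinj : Set.InjOn (act x) S := (act_injective x).injOn
      have hbij : Set.BijOn (act x) S S :=
        hfin.injOn_iff_bijOn_of_mapsTo hmaps |>.mp hinj
      obtain ⟨r, hr, hrq⟩ := hbij.surjOn hq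
      rw [← hrq, ← act_mul, inv_mul_cancel, act_one]
      exact hr
  exact key p hp

-- ===== generator computations =====
lemma mulVec_sigma1 (v : Fin 3 → ℂ) : (gσ₁ : M3).mulVec v = ![v 0, -v 1, -v 2] := by
  funext i
  fin_cases i <;> simp [gσ₁, Matrix.mulVec_diagonal]

lemma mulVec_sigma2 (v : Fin 3 → ℂ) : (gσ₂ : M3).mulVec v = ![-v 0, v 1, -v 2] := by
  funext i
  fin_cases i <;> simp [gσ₂, Matrix.mulVec_diagonal]

lemma mulVec_tau (v : Fin 3 → ℂ) : (gτ : M3).mulVec v = ![v 1, v 2, v 0] := by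
  funext i
  fin_cases i <;> simp [gτ, Mtau, Matrix.mulVec, dotProduct, Fin.sum_univ_three]

lemma act_eq_mk {g : SL3} {v w : Fin 3 → ℂ} (hv : v ≠ 0) (hw : w ≠ 0) (c : ℂ)
    (h : (g : M3).mulVec v = c • w) :
    act g (Projectivization.mk ℂ v hv) = Projectivization.mk ℂ w hw := by
  rw [act_mk]
  exact mk_eq_of _ _ c (by rw [← h])

-- ===== the orbit sets =====
def opt (a s t : ℂ) : P2 := Projectivization.mk ℂ ![1, s*a, t*a^2] (vne₀ one_ne_zero)

def oset (a : ℂ) : Set P2 := {opt a 1 1, opt a (-1) (-1), opt a (-1) 1, opt a 1 (-1)}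

lemma act_sigma1_opt (a s t : ℂ) : act gσ₁ (opt a s t) = opt a (-s) (-t) := by
  apply act_eq_mk _ _ 1
  rw [mulVec_sigma1]
  funext i
  fin_cases i <;> simp

lemma act_sigma2_opt (a s t : ℂ) : act gσ₂ (opt a s t) = opt a (-s) t := by
  apply act_eq_mk _ _ (-1)
  rw [mulVec_sigma2]
  funext i
  fin_cases i <;> simp

lemma act_tau_opt (a s t : ℂ) (h3 : a ^ 3 = 1) (hs : s ^ 2 = 1) :
    act gτ (opt a s t) = opt a (s*t) s := by
  apply act_eq_mk _ _ (s * a)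
  rw [mulVec_tau]
  funext i
  fin_cases i <;> simp
  · linear_combination -t * a ^ 2 * hs
  · linear_combination -a ^ 3 * hs - h3

-- ===== orbit identification =====
lemma opt_inj {a : ℂ} (ha : a ≠ 0) {s t s' t' : ℂ} (h : opt a s t = opt a s' t') :
    s = s' ∧ t = t' := by
  obtain ⟨h1, h2⟩ := mk_one_eq h
  exact ⟨mul_right_cancel₀ ha h1, mul_right_cancel₀ (pow_ne_zero 2 ha) h2⟩

lemma opt_ne {a : ℂ} (ha : a ≠ 0) {s t s' t' : ℂ} (h : ¬(s = s' ∧ t = t')) :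
    opt a s t ≠ opt a s' t' := fun he => h (opt_inj ha he)

lemma oset_finite (a : ℂ) : (oset a).Finite := by
  unfold oset
  exact (((Set.finite_singleton _).insert _).insert _).insert _

lemma ne_zero_of_cube (a : ℂ) (h3 : a ^ 3 = 1) : a ≠ 0 := by
  intro h
  rw [h] at h3
  norm_num at h3

lemma orbit_eq_oset (a : ℂ) (h3 : a ^ 3 = 1) : projOrbitSL TA4 (opt a 1 1) = oset a := by
  have ha : a ≠ 0 := ne_zero_of_cube a h3
  apply Set.Subset.antisymm
  · unfold TA4
    apply orbit_subset (oset_finite a) (by left; rfl)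
    intro g hg q hq
    simp only [Set.mem_insert_iff, Set.mem_singleton_iff] at hg
    rcases hg with h | h | h
    · have hgg : g = gσ₁ := Subtype.ext h
      subst hgg
      rcases hq with rfl | rfl | rfl | rfl <;> rw [act_sigma1_opt] <;> norm_num [oset]
    · have hgg : g = gσ₂ := Subtype.ext h
      subst hgg
      rcases hq with rfl | rfl | rfl | rfl <;> rw [act_sigma2_opt] <;> norm_num [oset]
    · have hgg : g = gτ := Subtype.ext h
      subst hgg
      rcases hq with rfl | rfl | rfl | rfl <;>
        rw [act_tau_opt _ _ _ h3 (by norm_num)] <;> norm_num [oset]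
  · intro q hq
    rcases hq with rfl | rfl | rfl | rfl
    · exact self_mem_orbit _ _
    · have := act_sigma1_opt a 1 1
      rw [← this]
      exact act_mem_orbit gσ₁_mem _
    · have := act_sigma2_opt a 1 1
      rw [← this]
      exact act_mem_orbit gσ₂_mem _
    · have h2 := act_sigma2_opt a 1 1
      have h1 := act_sigma1_opt a (-1) 1
      norm_num at h1
      rw [← h1, ← h2]
      rw [← act_mul]
      exact act_mem_orbit (mul_mem gσ₁_mem gσ₂_mem) _

lemma oset_encard (a : ℂ) (ha : a ≠ 0) : (oset a).encard = 4 := by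
  have h1 : opt a 1 1 ∉ ({opt a (-1) (-1), opt a (-1) 1, opt a 1 (-1)} : Set P2) := by
    simp only [Set.mem_insert_iff, Set.mem_singleton_iff]
    push_neg
    exact ⟨opt_ne ha (by norm_num), opt_ne ha (by norm_num), opt_ne ha (by norm_num)⟩
  have h2 : opt a (-1) (-1) ∉ ({opt a (-1) 1, opt a 1 (-1)} : Set P2) := by
    simp only [Set.mem_insert_iff, Set.mem_singleton_iff]
    push_neg
    exact ⟨opt_ne ha (by norm_num), opt_ne ha (by norm_num)⟩
  have h3 : opt a (-1) 1 ≠ opt a 1 (-1) := opt_ne ha (by norm_num)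
  unfold oset
  rw [Set.encard_insert_of_notMem h1, Set.encard_insert_of_notMem h2, Set.encard_pair h3]
  rfl

lemma q1_eq : q₁ = opt 1 1 1 := by
  apply mk_eq_of _ _ 1
  funext i
  fin_cases i <;> simp

lemma q2_eq : q₂ = opt (zeta 3) 1 1 := by
  apply mk_eq_of _ _ 1
  funext i
  fin_cases i <;> simp

lemma q3_eq : q₃ = opt (zeta 3 ^ 2) 1 1 := by
  apply mk_eq_of _ _ 1
  funext i
  fin_cases i <;> simp
  linear_combination zeta 3 * w3

-- ===== collinearity =====
lemma li₃ {v₁ v₂ v₃ : Fin 3 → ℂ} (h₁ : v₁ ≠ 0) (h₂ : v₂ ≠ 0) (h₃ : v₃ ≠ 0) {p q r : P2}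
    (hp : p = Projectivization.mk ℂ v₁ h₁) (hq : q = Projectivization.mk ℂ v₂ h₂)
    (hr : r = Projectivization.mk ℂ v₃ h₃)
    (hdet : (Matrix.of ![v₁, v₂, v₃]).det ≠ 0) :
    LinearIndependent ℂ ![p.rep, q.rep, r.rep] := by
  obtain ⟨a₁, ha₁⟩ := Projectivization.exists_smul_eq_mk_rep ℂ v₁ h₁
  obtain ⟨a₂, ha₂⟩ := Projectivization.exists_smul_eq_mk_rep ℂ v₂ h₂
  obtain ⟨a₃, ha₃⟩ := Projectivization.exists_smul_eq_mk_rep ℂ v₃ h₃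
  have li : LinearIndependent ℂ (fun i => (Matrix.of ![v₁, v₂, v₃]) i) :=
    Matrix.linearIndependent_rows_iff_isUnit.mpr
      ((Matrix.isUnit_iff_isUnit_det _).mpr (isUnit_iff_ne_zero.mpr hdet))
  have h := li.units_smul ![a₁, a₂, a₃]
  have hfun : (![a₁, a₂, a₃] • fun i => (Matrix.of ![v₁, v₂, v₃]) i) = ![p.rep, q.rep, r.rep] := by
    funext i
    fin_cases i
    · subst hp; exact ha₁
    · subst hq; exact ha₂
    · subst hr; exact ha₃
  rwa [hfun] at h

lemma det_opt (a s₁ t₁ s₂ t₂ s₃ t₃ : ℂ) :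
    (Matrix.of ![![1,s₁*a,t₁*a^2],![1,s₂*a,t₂*a^2],![1,s₃*a,t₃*a^2]]).det
      = a^3 * (Matrix.of ![![1,s₁,t₁],![1,s₂,t₂],![1,s₃,t₃]]).det := by
  simp [Matrix.det_fin_three]
  ring

/-- No three points of `oset a` are collinear. -/
lemma noThree_oset (a : ℂ) (h3 : a ^ 3 = 1) : NoThreeCollinear (oset a) := by
  intro p q r hp hq hr hpq hpr hqr
  simp only [oset, Set.mem_insert_iff, Set.mem_singleton_iff] at hp hq hr
  rcases hp with rfl|rfl|rfl|rfl <;> rcases hq with rfl|rfl|rfl|rfl <;>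
      rcases hr with rfl|rfl|rfl|rfl <;>
    first
      | exact absurd rfl hpq
      | exact absurd rfl hpr
      | exact absurd rfl hqr
      | (refine li₃ (vne₀ one_ne_zero) (vne₀ one_ne_zero) (vne₀ one_ne_zero) rfl rfl rfl ?_
         rw [det_opt, h3, one_mul]
         simp only [Matrix.det_fin_three, Matrix.of_apply, Matrix.cons_val', Matrix.cons_val_zero,
           Matrix.cons_val_one, Matrix.head_cons, Matrix.empty_val', Matrix.cons_val_fin_one,
           Matrix.head_fin_const, Matrix.cons_val_two, Matrix.tail_cons]
         norm_num)

-- ===== orbit distinctness =====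
lemma opt11_mem_oset_cases {a b : ℂ} (h : opt a 1 1 ∈ oset b) : a = b ∨ a = -b := by
  simp only [oset, Set.mem_insert_iff, Set.mem_singleton_iff] at h
  rcases h with h|h|h|h <;> obtain ⟨h1, -⟩ := mk_one_eq h
  · left; linear_combination h1
  · right; linear_combination h1
  · right; linear_combination h1
  · left; linear_combination h1

lemma oset_one_ne_w : oset 1 ≠ oset (zeta 3) := by
  intro h
  have hm : opt 1 1 1 ∈ oset (zeta 3) := h ▸ (by left; rfl)
  rcases opt11_mem_oset_cases hm with h'|h'
  · exact w_ne_one h'.symm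
  · exact w_ne_neg_one (by linear_combination h')
lemma oset_one_ne_w2 : oset 1 ≠ oset (zeta 3 ^ 2) := by
  intro h
  have hm : opt 1 1 1 ∈ oset (zeta 3 ^ 2) := h ▸ (by left; rfl)
  rcases opt11_mem_oset_cases hm with h'|h'
  · exact w_sq_ne_one h'.symm
  · exact w_sq_ne_neg_one (by linear_combination h')
lemma oset_w_ne_w2 : oset (zeta 3) ≠ oset (zeta 3 ^ 2) := by
  intro h
  have hm : opt (zeta 3) 1 1 ∈ oset (zeta 3 ^ 2) := h ▸ (by left; rfl)
  rcases opt11_mem_oset_cases hm with h'|h'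
  · exact w_ne_w_sq h'
  · have : (1:ℂ) = 0 := by linear_combination w_sq_add - h'
    norm_num at this

-- ===== classification : generic points =====
def gpt (u v : ℂ) : P2 := Projectivization.mk ℂ ![1, u, v] (vne₀ one_ne_zero)

lemma gpt_inj {u v u' v' : ℂ} (h : gpt u v = gpt u' v') : u = u' ∧ v = v' := mk_one_eq h

lemma act_sigma1_gpt (u v : ℂ) : act gσ₁ (gpt u v) = gpt (-u) (-v) := by
  apply act_eq_mk _ _ 1
  rw [mulVec_sigma1]
  funext i
  fin_cases i <;> simp

lemma act_sigma2_gpt (u v : ℂ) : act gσ₂ (gpt u v) = gpt (-u) v := by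
  apply act_eq_mk _ _ (-1)
  rw [mulVec_sigma2]
  funext i
  fin_cases i <;> simp

lemma act_s12_gpt (u v : ℂ) : act (gσ₁ * gσ₂) (gpt u v) = gpt u (-v) := by
  rw [act_mul, act_sigma2_gpt, act_sigma1_gpt, neg_neg]

lemma act_tau_gpt (u v : ℂ) (h : ![u, v, 1] ≠ 0) :
    act gτ (gpt u v) = Projectivization.mk ℂ ![u, v, 1] h := by
  apply act_eq_mk _ _ 1
  rw [mulVec_tau]
  funext i
  fin_cases i <;> simp

lemma gpt_ne {u v u' v' : ℂ} (h : ¬(u = u' ∧ v = v')) : gpt u v ≠ gpt u' v' :=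
  fun he => h (gpt_inj he)

lemma cne_neg_self {u : ℂ} (hu : u ≠ 0) : ¬ (u = -u) := by
  intro h
  apply hu
  linear_combination h / 2

lemma classify_nonzero {u v : ℂ} (hu : u ≠ 0) (hv : v ≠ 0)
    (h4 : (projOrbitSL TA4 (gpt u v)).encard = 4) :
    ∃ a s t : ℂ, a ^ 3 = 1 ∧ (s = 1 ∨ s = -1) ∧ (t = 1 ∨ t = -1) ∧ gpt u v = opt a s t := by
  set S : Set P2 := {gpt u v, gpt (-u) (-v), gpt (-u) v, gpt u (-v)} with hS
  have hsub : S ⊆ projOrbitSL TA4 (gpt u v) := by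
    intro q hq
    rcases hq with rfl | rfl | rfl | rfl
    · exact self_mem_orbit _ _
    · rw [← act_sigma1_gpt]; exact act_mem_orbit gσ₁_mem _
    · rw [← act_sigma2_gpt]; exact act_mem_orbit gσ₂_mem _
    · rw [← act_s12_gpt]; exact act_mem_orbit (mul_mem gσ₁_mem gσ₂_mem) _
  have hScard : S.encard = 4 := by
    have h1 : gpt u v ∉ ({gpt (-u) (-v), gpt (-u) v, gpt u (-v)} : Set P2) := by
      simp only [Set.mem_insert_iff, Set.mem_singleton_iff]
      push_neg
      refine ⟨gpt_ne ?_, gpt_ne ?_, gpt_ne ?_⟩ <;> rintro ⟨h1, h2⟩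
      · exact cne_neg_self hu h1
      · exact cne_neg_self hu h1
      · exact cne_neg_self hv h2
    have h2 : gpt (-u) (-v) ∉ ({gpt (-u) v, gpt u (-v)} : Set P2) := by
      simp only [Set.mem_insert_iff, Set.mem_singleton_iff]
      push_neg
      refine ⟨gpt_ne ?_, gpt_ne ?_⟩ <;> rintro ⟨h1, h2⟩
      · exact cne_neg_self hv (by linear_combination -h2)
      · exact cne_neg_self hu (by linear_combination -h1)
    have h3 : gpt (-u) v ≠ gpt u (-v) := by
      apply gpt_ne
      rintro ⟨h1, h2⟩
      exact cne_neg_self hu (by linear_combination -h1)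
    rw [hS, Set.encard_insert_of_notMem h1, Set.encard_insert_of_notMem h2,
      Set.encard_pair h3]
    rfl
  have hfin : (projOrbitSL TA4 (gpt u v)).Finite := by
    apply Set.finite_of_encard_eq_coe (k := 4)
    rw [h4]; rfl
  have hSeq : S = projOrbitSL TA4 (gpt u v) :=
    hfin.eq_of_subset_of_encard_le' hsub (by rw [h4, hScard])
  have hne : ![u, v, 1] ≠ (0 : Fin 3 → ℂ) := vne₂ one_ne_zero
  have hτ : Projectivization.mk ℂ ![u, v, 1] hne ∈ S := by
    rw [hSeq, ← act_tau_gpt u v hne]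
    exact act_mem_orbit gτ_mem _
  rw [hS] at hτ
  simp only [Set.mem_insert_iff, Set.mem_singleton_iff] at hτ
  have extract : ∀ u' v' : ℂ, Projectivization.mk ℂ ![u, v, 1] hne = gpt u' v' →
      u * u' = v ∧ u * v' = 1 := by
    intro u' v' h
    rw [gpt, Projectivization.mk_eq_mk_iff'] at h
    obtain ⟨c, hc⟩ := h
    obtain ⟨e0, e1, e2⟩ := smul_comps hc
    rw [mul_one] at e0
    subst e0
    exact ⟨e1, e2⟩
  rcases hτ with h | h | h | h
  · obtain ⟨e1, e2⟩ := extract _ _ h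
    refine ⟨u, 1, 1, by linear_combination u * e1 + e2, Or.inl rfl, Or.inl rfl, ?_⟩
    apply mk_eq_of _ _ 1
    funext i
    fin_cases i <;> simp
    linear_combination e1
  · obtain ⟨e1, e2⟩ := extract _ _ h
    refine ⟨u, 1, -1, by linear_combination -u * e1 + e2, Or.inl rfl, Or.inr rfl, ?_⟩
    apply mk_eq_of _ _ 1
    funext i
    fin_cases i <;> simp
    linear_combination e1
  · obtain ⟨e1, e2⟩ := extract _ _ h
    refine ⟨-u, -1, -1, by linear_combination u * e1 + e2, Or.inr rfl, Or.inr rfl, ?_⟩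
    apply mk_eq_of _ _ 1
    funext i
    fin_cases i <;> simp
    linear_combination e1
  · obtain ⟨e1, e2⟩ := extract _ _ h
    refine ⟨-u, -1, 1, by linear_combination -u * e1 + e2, Or.inr rfl, Or.inl rfl, ?_⟩
    apply mk_eq_of _ _ 1
    funext i
    fin_cases i <;> simp
    linear_combination e1

-- ===== degenerate cases =====
def E₁ : P2 := Projectivization.mk ℂ ![1,0,0] (vne₀ one_ne_zero)
def E₂ : P2 := Projectivization.mk ℂ ![0,1,0] (vne₁ one_ne_zero)
def E₃ : P2 := Projectivization.mk ℂ ![0,0,1] (vne₂ one_ne_zero)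

def Eset : Set P2 := {E₁, E₂, E₃}

lemma orbit_basis_subset {p : P2} (hp : p ∈ Eset) : projOrbitSL TA4 p ⊆ Eset := by
  unfold TA4
  apply orbit_subset ((Set.finite_singleton _).insert _ |>.insert _) hp
  intro g hg q hq
  simp only [Set.mem_insert_iff, Set.mem_singleton_iff] at hg
  have mem1 : E₁ ∈ Eset := by left; rfl
  have mem2 : E₂ ∈ Eset := by right; left; rfl
  have mem3 : E₃ ∈ Eset := by right; right; rfl
  rcases hg with h | h | h
  · have hgg : g = gσ₁ := Subtype.ext h
    subst hgg
    rcases hq with rfl | rfl | rfl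
    · rw [show act gσ₁ E₁ = E₁ from by
        apply act_eq_mk _ _ 1; rw [mulVec_sigma1]; funext i; fin_cases i <;> simp]
      exact mem1
    · rw [show act gσ₁ E₂ = E₂ from by
        apply act_eq_mk _ _ (-1); rw [mulVec_sigma1]; funext i; fin_cases i <;> simp]
      exact mem2
    · rw [show act gσ₁ E₃ = E₃ from by
        apply act_eq_mk _ _ (-1); rw [mulVec_sigma1]; funext i; fin_cases i <;> simp]
      exact mem3
  · have hgg : g = gσ₂ := Subtype.ext h
    subst hgg
    rcases hq with rfl | rfl | rfl
    · rw [show act gσ₂ E₁ = E₁ from by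
        apply act_eq_mk _ _ (-1); rw [mulVec_sigma2]; funext i; fin_cases i <;> simp]
      exact mem1
    · rw [show act gσ₂ E₂ = E₂ from by
        apply act_eq_mk _ _ 1; rw [mulVec_sigma2]; funext i; fin_cases i <;> simp]
      exact mem2
    · rw [show act gσ₂ E₃ = E₃ from by
        apply act_eq_mk _ _ (-1); rw [mulVec_sigma2]; funext i; fin_cases i <;> simp]
      exact mem3
  · have hgg : g = gτ := Subtype.ext h
    subst hgg
    rcases hq with rfl | rfl | rfl
    · rw [show act gτ E₁ = E₃ from by
        apply act_eq_mk _ _ 1; rw [mulVec_tau]; funext i; fin_cases i <;> simp]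
      exact mem3
    · rw [show act gτ E₂ = E₁ from by
        apply act_eq_mk _ _ 1; rw [mulVec_tau]; funext i; fin_cases i <;> simp]
      exact mem1
    · rw [show act gτ E₃ = E₂ from by
        apply act_eq_mk _ _ 1; rw [mulVec_tau]; funext i; fin_cases i <;> simp]
      exact mem2

lemma orbit_basis_not4 {p : P2} (hp : p ∈ Eset) : (projOrbitSL TA4 p).encard ≠ 4 := by
  intro h4
  have hsub := orbit_basis_subset hp
  have hle : (projOrbitSL TA4 p).encard ≤ 3 := by
    calc (projOrbitSL TA4 p).encard ≤ Eset.encard := Set.encard_mono hsub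
    _ ≤ 3 := by
        unfold Eset
        calc ({E₁, E₂, E₃} : Set P2).encard ≤ ({E₂, E₃} : Set P2).encard + 1 :=
              Set.encard_insert_le _ _
          _ ≤ (({E₃} : Set P2).encard + 1) + 1 := by
              gcongr
              exact Set.encard_insert_le _ _
          _ = 3 := by rw [Set.encard_singleton]; rfl
  rw [h4] at hle
  norm_num at hle

lemma mk_ne {p q : Fin 3 → ℂ} {hp : p ≠ 0} {hq : q ≠ 0}
    (h : ∀ c : ℂ, ¬ c • q = p) : Projectivization.mk ℂ p hp ≠ Projectivization.mk ℂ q hq := by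
  intro heq
  rw [Projectivization.mk_eq_mk_iff'] at heq
  obtain ⟨c, hc⟩ := heq
  exact h c hc

lemma onezero_not4 {u : ℂ} (hu : u ≠ 0) :
    (projOrbitSL TA4 (Projectivization.mk ℂ ![1,u,0] (vne₀ one_ne_zero))).encard ≠ 4 := by
  intro h4
  set A : P2 := Projectivization.mk ℂ ![1,u,0] (vne₀ one_ne_zero) with hA
  set B : P2 := Projectivization.mk ℂ ![1,-u,0] (vne₀ one_ne_zero) with hB
  set C : P2 := Projectivization.mk ℂ ![u,0,1] (vne₂ one_ne_zero) with hC
  set D : P2 := Projectivization.mk ℂ ![u,0,-1] (vne₀ hu) with hD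
  set E : P2 := Projectivization.mk ℂ ![0,1,u] (vne₁ one_ne_zero) with hE
  have hBmem : B ∈ projOrbitSL TA4 A := by
    rw [show B = act gσ₁ A from by
      rw [hA, hB]; symm; apply act_eq_mk _ _ 1; rw [mulVec_sigma1]; funext i;
        fin_cases i <;> simp]
    exact act_mem_orbit gσ₁_mem _
  have hCmem : C ∈ projOrbitSL TA4 A := by
    rw [show C = act gτ A from by
      rw [hA, hC]; symm; apply act_eq_mk _ _ 1; rw [mulVec_tau]; funext i;
        fin_cases i <;> simp]
    exact act_mem_orbit gτ_mem _
  have hDmem : D ∈ projOrbitSL TA4 A := by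
    rw [show D = act (gσ₁ * gτ) A from by
      rw [hA, hD, act_mul]
      rw [show act gτ (Projectivization.mk ℂ ![1,u,0] (vne₀ one_ne_zero)) =
          Projectivization.mk ℂ ![u,0,1] (vne₂ one_ne_zero) from by
        apply act_eq_mk _ _ 1; rw [mulVec_tau]; funext i; fin_cases i <;> simp]
      symm
      apply act_eq_mk _ _ 1; rw [mulVec_sigma1]; funext i; fin_cases i <;> simp]
    exact act_mem_orbit (mul_mem gσ₁_mem gτ_mem) _
  have hEmem : E ∈ projOrbitSL TA4 A := by
    rw [show E = act (gτ * gτ) A from by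
      rw [hA, hE, act_mul]
      rw [show act gτ (Projectivization.mk ℂ ![1,u,0] (vne₀ one_ne_zero)) =
          Projectivization.mk ℂ ![u,0,1] (vne₂ one_ne_zero) from by
        apply act_eq_mk _ _ 1; rw [mulVec_tau]; funext i; fin_cases i <;> simp]
      symm
      apply act_eq_mk _ _ 1; rw [mulVec_tau]; funext i; fin_cases i <;> simp]
    exact act_mem_orbit (mul_mem gτ_mem gτ_mem) _
  -- pairwise distinct
  have nAB : A ≠ B := by
    rw [hA, hB]; apply mk_ne; intro c hc
    obtain ⟨e0, e1, e2⟩ := smul_comps hc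
    rw [mul_one] at e0; subst e0
    exact cne_neg_self hu (by linear_combination -e1)
  have nAC : A ≠ C := by
    rw [hA, hC]; apply mk_ne; intro c hc
    obtain ⟨e0, e1, e2⟩ := smul_comps hc
    exact hu (by linear_combination -e1)
  have nAD : A ≠ D := by
    rw [hA, hD]; apply mk_ne; intro c hc
    obtain ⟨e0, e1, e2⟩ := smul_comps hc
    exact hu (by linear_combination -e1)
  have nAE : A ≠ E := by
    rw [hA, hE]; apply mk_ne; intro c hc
    obtain ⟨e0, e1, e2⟩ := smul_comps hc
    simp at e0
  have nBC : B ≠ C := by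
    rw [hB, hC]; apply mk_ne; intro c hc
    obtain ⟨e0, e1, e2⟩ := smul_comps hc
    exact hu (by linear_combination e1)
  have nBD : B ≠ D := by
    rw [hB, hD]; apply mk_ne; intro c hc
    obtain ⟨e0, e1, e2⟩ := smul_comps hc
    exact hu (by linear_combination e1)
  have nBE : B ≠ E := by
    rw [hB, hE]; apply mk_ne; intro c hc
    obtain ⟨e0, e1, e2⟩ := smul_comps hc
    simp at e0
  have nCD : C ≠ D := by
    rw [hC, hD]; apply mk_ne; intro c hc
    obtain ⟨e0, e1, e2⟩ := smul_comps hc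
    have hc1 : c = 1 := mul_right_cancel₀ hu (by rw [e0, one_mul])
    subst hc1
    norm_num at e2
  have nCE : C ≠ E := by
    rw [hC, hE]; apply mk_ne; intro c hc
    obtain ⟨e0, e1, e2⟩ := smul_comps hc
    exact hu (by linear_combination -e0)
  have nDE : D ≠ E := by
    rw [hD, hE]; apply mk_ne; intro c hc
    obtain ⟨e0, e1, e2⟩ := smul_comps hc
    exact hu (by linear_combination -e0)
  have hsub : ({A, B, C, D, E} : Set P2) ⊆ projOrbitSL TA4 A := by
    intro q hq
    rcases hq with rfl | rfl | rfl | rfl | rfl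
    · exact self_mem_orbit _ _
    · exact hBmem
    · exact hCmem
    · exact hDmem
    · exact hEmem
  have hcard : ({A, B, C, D, E} : Set P2).encard = 5 := by
    rw [Set.encard_insert_of_notMem (by
        simp only [Set.mem_insert_iff, Set.mem_singleton_iff]; push_neg
        exact ⟨nAB, nAC, nAD, nAE⟩),
      Set.encard_insert_of_notMem (by
        simp only [Set.mem_insert_iff, Set.mem_singleton_iff]; push_neg
        exact ⟨nBC, nBD, nBE⟩),
      Set.encard_insert_of_notMem (by
        simp only [Set.mem_insert_iff, Set.mem_singleton_iff]; push_neg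
        exact ⟨nCD, nCE⟩),
      Set.encard_pair nDE]
    rfl
  have : (5 : ℕ∞) ≤ 4 := by
    calc (5 : ℕ∞) = ({A, B, C, D, E} : Set P2).encard := hcard.symm
      _ ≤ (projOrbitSL TA4 A).encard := Set.encard_mono hsub
      _ = 4 := h4
  norm_num at this

lemma act_tau_xyz {x y z : ℂ} (h : ![x,y,z] ≠ 0) (h' : ![y,z,x] ≠ 0) :
    act gτ (Projectivization.mk ℂ ![x,y,z] h) = Projectivization.mk ℂ ![y,z,x] h' := by
  apply act_eq_mk _ _ 1
  rw [mulVec_tau]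
  funext i
  fin_cases i <;> simp


/-- the `T`-orbits of `[1:1:1]`, `[1:ω:ω²]`, `[1:ω²:ω]` each have exactly 4
elements and are pairwise distinct; no three points of any one of them are collinear; and
every point of `ℙ²` whose `T`-orbit has exactly 4 elements belongs to one of these orbits. -/
theorem statement7 :
    ((projOrbitSL TA4 q₁).encard = 4 ∧ (projOrbitSL TA4 q₂).encard = 4 ∧
      (projOrbitSL TA4 q₃).encard = 4) ∧
    (projOrbitSL TA4 q₁ ≠ projOrbitSL TA4 q₂ ∧ projOrbitSL TA4 q₁ ≠ projOrbitSL TA4 q₃ ∧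
      projOrbitSL TA4 q₂ ≠ projOrbitSL TA4 q₃) ∧
    (NoThreeCollinear (projOrbitSL TA4 q₁) ∧ NoThreeCollinear (projOrbitSL TA4 q₂) ∧
      NoThreeCollinear (projOrbitSL TA4 q₃)) ∧
    (∀ X : P2, (projOrbitSL TA4 X).encard = 4 →
      X ∈ projOrbitSL TA4 q₁ ∨ X ∈ projOrbitSL TA4 q₂ ∨ X ∈ projOrbitSL TA4 q₃) := by
  have e1 : projOrbitSL TA4 q₁ = oset 1 := by rw [q1_eq]; exact orbit_eq_oset 1 (by norm_num)
  have e2 : projOrbitSL TA4 q₂ = oset (zeta 3) := by rw [q2_eq]; exact orbit_eq_oset _ w3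
  have hw2 : (zeta 3 ^ 2) ^ 3 = 1 := by linear_combination (zeta 3 ^ 3 + 1) * w3
  have e3 : projOrbitSL TA4 q₃ = oset (zeta 3 ^ 2) := by rw [q3_eq]; exact orbit_eq_oset _ hw2
  refine ⟨⟨?_, ?_, ?_⟩, ⟨?_, ?_, ?_⟩, ⟨?_, ?_, ?_⟩, ?_⟩
  · rw [e1]; exact oset_encard 1 one_ne_zero
  · rw [e2]; exact oset_encard _ w_ne_zero
  · rw [e3]; exact oset_encard _ w_sq_ne_zero
  · rw [e1, e2]; exact oset_one_ne_w
  · rw [e1, e3]; exact oset_one_ne_w2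
  · rw [e2, e3]; exact oset_w_ne_w2
  · rw [e1]; exact noThree_oset 1 (by norm_num)
  · rw [e2]; exact noThree_oset _ w3
  · rw [e3]; exact noThree_oset _ hw2
  · intro X
    induction X using Projectivization.ind with
    | h v hv =>
    intro h4
    have hveq : v = ![v 0, v 1, v 2] := by funext i; fin_cases i <;> rfl
    have hv' : ![v 0, v 1, v 2] ≠ 0 := hveq ▸ hv
    have hXeq : Projectivization.mk ℂ v hv = Projectivization.mk ℂ ![v 0, v 1, v 2] hv' := by
      apply mk_eq_of _ _ 1
      rw [one_smul, ← hveq]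
    rw [hXeq] at h4 ⊢
    by_cases hx : v 0 = 0 <;> by_cases hy : v 1 = 0 <;> by_cases hz : v 2 = 0
    -- all zero : contradiction
    · exact absurd (by funext i; fin_cases i <;> simp [hx, hy, hz]) hv'
    -- x = y = 0, z ≠ 0 : X = E₃
    · exfalso
      have hX3 : Projectivization.mk ℂ ![v 0, v 1, v 2] hv' = E₃ := by
        apply mk_eq_of _ _ (v 2)
        funext i
        fin_cases i <;> simp [hx, hy]
      rw [hX3] at h4
      exact orbit_basis_not4 (by right; right; rfl) h4
    -- x = z = 0, y ≠ 0 : X = E₂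
    · exfalso
      have hX2 : Projectivization.mk ℂ ![v 0, v 1, v 2] hv' = E₂ := by
        apply mk_eq_of _ _ (v 1)
        funext i
        fin_cases i <;> simp [hx, hz]
      rw [hX2] at h4
      exact orbit_basis_not4 (by right; left; rfl) h4
    -- x = 0, y ≠ 0, z ≠ 0 : one-zero case (rotate)
    · exfalso
      have hrot : act gτ (Projectivization.mk ℂ ![v 0, v 1, v 2] hv') =
          Projectivization.mk ℂ ![v 1, v 2, v 0] (vne₀ hy) := act_tau_xyz _ _
      have hnorm : Projectivization.mk ℂ ![v 1, v 2, v 0] (vne₀ hy) =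
          Projectivization.mk ℂ ![1, v 2 / v 1, 0] (vne₀ one_ne_zero) := by
        apply mk_eq_of _ _ (v 1)
        funext i
        fin_cases i <;> simp [hx]
        field_simp
      have h4' : (projOrbitSL TA4 (Projectivization.mk ℂ ![1, v 2 / v 1, 0]
          (vne₀ one_ne_zero))).encard = 4 := by
        rw [← hnorm, ← hrot, orbit_act_eq gτ_mem]
        exact h4
      exact onezero_not4 (div_ne_zero hz hy) h4'
    -- y = z = 0, x ≠ 0 : X = E₁
    · exfalso
      have hX1 : Projectivization.mk ℂ ![v 0, v 1, v 2] hv' = E₁ := by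
        apply mk_eq_of _ _ (v 0)
        funext i
        fin_cases i <;> simp [hy, hz]
      rw [hX1] at h4
      exact orbit_basis_not4 (by left; rfl) h4
    -- y = 0, x ≠ 0, z ≠ 0 : one-zero case (rotate twice)
    · exfalso
      have hrot : act gτ (Projectivization.mk ℂ ![v 0, v 1, v 2] hv') =
          Projectivization.mk ℂ ![v 1, v 2, v 0] (vne₁ hz) := act_tau_xyz _ _
      have hrot2 : act gτ (Projectivization.mk ℂ ![v 1, v 2, v 0] (vne₁ hz)) =
          Projectivization.mk ℂ ![v 2, v 0, v 1] (vne₀ hz) := act_tau_xyz _ _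
      have hnorm : Projectivization.mk ℂ ![v 2, v 0, v 1] (vne₀ hz) =
          Projectivization.mk ℂ ![1, v 0 / v 2, 0] (vne₀ one_ne_zero) := by
        apply mk_eq_of _ _ (v 2)
        funext i
        fin_cases i <;> simp [hy]
        field_simp
      have h4' : (projOrbitSL TA4 (Projectivization.mk ℂ ![1, v 0 / v 2, 0]
          (vne₀ one_ne_zero))).encard = 4 := by
        rw [← hnorm, ← hrot2, ← hrot, orbit_act_eq gτ_mem, orbit_act_eq gτ_mem]
        exact h4
      exact onezero_not4 (div_ne_zero hx hz) h4'
    -- z = 0, x ≠ 0, y ≠ 0 : one-zero case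
    · exfalso
      have hnorm : Projectivization.mk ℂ ![v 0, v 1, v 2] hv' =
          Projectivization.mk ℂ ![1, v 1 / v 0, 0] (vne₀ one_ne_zero) := by
        apply mk_eq_of _ _ (v 0)
        funext i
        fin_cases i <;> simp [hz]
        field_simp
      rw [hnorm] at h4
      exact onezero_not4 (div_ne_zero hy hx) h4
    -- generic case
    · have hgpt : Projectivization.mk ℂ ![v 0, v 1, v 2] hv' = gpt (v 1 / v 0) (v 2 / v 0) := by
        apply mk_eq_of _ _ (v 0)
        funext i
        fin_cases i <;> simp <;> field_simp
      rw [hgpt] at h4 ⊢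
      obtain ⟨a, s, t, ha3, hs, ht, heq⟩ :=
        classify_nonzero (div_ne_zero hy hx) (div_ne_zero hz hx) h4
      rw [heq]
      have hmem : opt a s t ∈ oset a := by
        rcases hs with rfl | rfl <;> rcases ht with rfl | rfl <;> simp [oset]
      rcases cube_root_cases ha3 with rfl | rfl | rfl
      · left; rw [e1]; exact hmem
      · right; left; rw [e2]; exact hmem
      · right; right; rw [e3]; exact hmem
end
end

section
/- Let G ≤ SL(3,ℂ) be the subgroup generated by diag(1,-1,-1), diag(-1,1,-1), M_τ, and the matrix σ with rows (-1,0,0), (0,0,-1), (0,-1,0). Then G has order 24, G is isomorphic to the symmetric group S₄ on 4 letters, and the identity matrix is the only scalar matrix contained in G. -/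
open Matrix Complex

noncomputable section

/-- The subgroup of `SL(3,ℂ)` generated by `diag(1,-1,-1)`, `diag(-1,1,-1)`, `M_τ` and `σ`,
where `σ` has rows `(-1,0,0)`, `(0,0,-1)`, `(0,-1,0)`. -/
def GS4 : Subgroup SL3 :=
  genSL {Matrix.diagonal ![1, -1, -1], Matrix.diagonal ![-1, 1, -1], Mtau,
         !![-1,0,0; 0,0,-1; 0,-1,0]}

namespace S10aux

/-- Character table of `(ℤ/2)²`, indexed by `Fin 4`. -/
def H4 (a b : Fin 4) : ℤ := (-1)^(a.val/2 * (b.val/2) + a.val%2 * (b.val%2))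

/-- The (sign ⊗ standard) representation of `S₄`, with integer matrices. -/
def w (σ : Equiv.Perm (Fin 4)) : Matrix (Fin 3) (Fin 3) ℤ :=
  Matrix.of fun i j => (Equiv.Perm.sign σ : ℤ) *
    ((∑ b : Fin 4, H4 i.succ (σ b) * H4 b j.succ) / 4)

def ι : Matrix (Fin 3) (Fin 3) ℤ →+* M3 := (Int.castRingHom ℂ).mapMatrix

lemma ι_inj : Function.Injective ι :=
  fun _ _ h => Matrix.map_injective Int.cast_injective h

lemma wone : w 1 = 1 := by decide

set_option maxHeartbeats 4000000 in
lemma wmul : ∀ σ τ : Equiv.Perm (Fin 4), w (σ * τ) = w σ * w τ := by decide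

set_option maxHeartbeats 4000000 in
lemma winj : ∀ σ τ : Equiv.Perm (Fin 4), w σ = w τ → σ = τ := by decide

set_option maxHeartbeats 1000000 in
lemma wdet : ∀ σ : Equiv.Perm (Fin 4), (w σ).det = 1 := by decide

set_option maxHeartbeats 1000000 in
lemma wscalar : ∀ σ : Equiv.Perm (Fin 4),
    w σ = (w σ 0 0) • (1 : Matrix (Fin 3) (Fin 3) ℤ) → w σ = 1 := by decide

noncomputable def ψ : Equiv.Perm (Fin 4) →* SL3 where
  toFun σ := ⟨ι (w σ), by
    have h := (Int.castRingHom ℂ).map_det (w σ)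
    rw [wdet σ] at h
    simpa [ι] using h.symm⟩
  map_one' := Subtype.ext (by simp [wone])
  map_mul' σ τ := Subtype.ext (by simp [wmul σ τ]; rfl)

lemma ψ_coe (σ : Equiv.Perm (Fin 4)) : ((ψ σ : SL3) : M3) = ι (w σ) := rfl

lemma ψ_inj : Function.Injective ψ :=
  fun σ τ h => winj σ τ (ι_inj (Subtype.ext_iff.mp h))

def σ₁ : Equiv.Perm (Fin 4) := Equiv.swap 0 2 * Equiv.swap 1 3
def σ₂ : Equiv.Perm (Fin 4) := Equiv.swap 0 1 * Equiv.swap 2 3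
def σ₃ : Equiv.Perm (Fin 4) := Equiv.swap 1 2 * Equiv.swap 2 3
def σ₄ : Equiv.Perm (Fin 4) := Equiv.swap 1 3

lemma hw1 : w σ₁ = !![1,0,0; 0,-1,0; 0,0,-1] := by decide
lemma hw2 : w σ₂ = !![-1,0,0; 0,1,0; 0,0,-1] := by decide
lemma hw3 : w σ₃ = !![0,1,0; 0,0,1; 1,0,0] := by decide
lemma hw4 : w σ₄ = !![-1,0,0; 0,0,-1; 0,-1,0] := by decide

lemma hrot : finRotate 4 = σ₂ * σ₄ := by decide
lemma hswap : Equiv.swap (0 : Fin 4) 1 = σ₂ * σ₃ * σ₄ := by decide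

lemma hι1 : ι !![1,0,0; 0,-1,0; 0,0,-1] = Matrix.diagonal ![(1:ℂ),-1,-1] := by
  ext i j
  fin_cases i <;> fin_cases j <;>
    simp [ι, RingHom.mapMatrix_apply, Matrix.map_apply, Matrix.diagonal, Matrix.vecHead, Matrix.vecTail]

lemma hι2 : ι !![-1,0,0; 0,1,0; 0,0,-1] = Matrix.diagonal ![(-1:ℂ),1,-1] := by
  ext i j
  fin_cases i <;> fin_cases j <;>
    simp [ι, RingHom.mapMatrix_apply, Matrix.map_apply, Matrix.diagonal, Matrix.vecHead, Matrix.vecTail]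

lemma hι3 : ι !![0,1,0; 0,0,1; 1,0,0] = Mtau := by
  ext i j
  fin_cases i <;> fin_cases j <;>
    simp [ι, RingHom.mapMatrix_apply, Matrix.map_apply, Mtau, Matrix.vecHead, Matrix.vecTail]

lemma hι4 : ι !![-1,0,0; 0,0,-1; 0,-1,0] = !![(-1:ℂ),0,0; 0,0,-1; 0,-1,0] := by
  ext i j
  fin_cases i <;> fin_cases j <;>
    simp [ι, RingHom.mapMatrix_apply, Matrix.map_apply, Matrix.vecHead, Matrix.vecTail]

lemma hψ1 : ((ψ σ₁ : SL3) : M3) = Matrix.diagonal ![(1:ℂ),-1,-1] := by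
  rw [ψ_coe, hw1, hι1]
lemma hψ2 : ((ψ σ₂ : SL3) : M3) = Matrix.diagonal ![(-1:ℂ),1,-1] := by
  rw [ψ_coe, hw2, hι2]
lemma hψ3 : ((ψ σ₃ : SL3) : M3) = Mtau := by
  rw [ψ_coe, hw3, hι3]
lemma hψ4 : ((ψ σ₄ : SL3) : M3) = !![(-1:ℂ),0,0; 0,0,-1; 0,-1,0] := by
  rw [ψ_coe, hw4, hι4]

lemma mem1 : ψ σ₁ ∈ GS4 := Subgroup.subset_closure (by rw [Set.mem_setOf_eq, hψ1]; left; rfl)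
lemma mem2 : ψ σ₂ ∈ GS4 := Subgroup.subset_closure
  (by rw [Set.mem_setOf_eq, hψ2]; right; left; rfl)
lemma mem3 : ψ σ₃ ∈ GS4 := Subgroup.subset_closure
  (by rw [Set.mem_setOf_eq, hψ3]; right; right; left; rfl)
lemma mem4 : ψ σ₄ ∈ GS4 := Subgroup.subset_closure
  (by rw [Set.mem_setOf_eq, hψ4]; right; right; right; rfl)

lemma le1 : GS4 ≤ ψ.range := by
  apply (Subgroup.closure_le _).mpr
  intro g hg
  simp only [Set.mem_setOf_eq, Set.mem_insert_iff, Set.mem_singleton_iff] at hg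
  rcases hg with h | h | h | h
  · exact ⟨σ₁, Subtype.ext (by rw [hψ1, h])⟩
  · exact ⟨σ₂, Subtype.ext (by rw [hψ2, h])⟩
  · exact ⟨σ₃, Subtype.ext (by rw [hψ3, h])⟩
  · exact ⟨σ₄, Subtype.ext (by rw [hψ4, h])⟩

lemma top_gen : Subgroup.closure {finRotate 4, Equiv.swap (0 : Fin 4) 1} = ⊤ := by
  have h := Equiv.Perm.closure_cycle_adjacent_swap (isCycle_finRotate (n := 2))
    support_finRotate 0
  have h0 : finRotate 4 0 = 1 := by decide
  rwa [h0] at h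

lemma le2 : ψ.range ≤ GS4 := by
  rw [MonoidHom.range_eq_map, ← top_gen, MonoidHom.map_closure]
  apply (Subgroup.closure_le _).mpr
  rintro x ⟨y, hy, rfl⟩
  rcases hy with h | h
  · rw [h, hrot, _root_.map_mul]
    exact mul_mem mem2 mem4
  · rw [Set.mem_singleton_iff] at h
    rw [h, hswap, _root_.map_mul, _root_.map_mul]
    exact mul_mem (mul_mem mem2 mem3) mem4

lemma hGS4 : GS4 = ψ.range := le_antisymm le1 le2

end S10aux

open S10aux in
/-- the group `G = ⟨diag(1,-1,-1), diag(-1,1,-1), M_τ, σ⟩ ≤ SL(3,ℂ)` has order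
24, is isomorphic to the symmetric group `S₄`, and contains no scalar matrix other than the
identity. -/
theorem statement10 :
    Nat.card GS4 = 24 ∧
    Nonempty (GS4 ≃* Equiv.Perm (Fin 4)) ∧
    (∀ g : SL3, g ∈ GS4 → (∃ c : ℂ, (g : M3) = c • (1 : M3)) → (g : M3) = 1) := by
    have e : (GS4 : Subgroup SL3) ≃* Equiv.Perm (Fin 4) :=
      (MulEquiv.subgroupCongr hGS4).trans (MonoidHom.ofInjective ψ_inj).symm
    refine ⟨?_, ⟨e⟩, ?_⟩
    · rw [Nat.card_congr e.toEquiv, Nat.card_eq_fintype_card]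
      norm_num [Fintype.card_perm, Nat.factorial]
    · rintro g hg ⟨c, hcg⟩
      rw [hGS4] at hg
      obtain ⟨σ, hσ⟩ := hg
      have hcoe : (g : M3) = ι (w σ) := by rw [← hσ]; rfl
      rw [hcoe] at hcg
      have hentry : ∀ i j, ((w σ i j : ℤ) : ℂ) = c * (if i = j then 1 else 0) := by
        intro i j
        have := congrFun (congrFun hcg i) j
        simpa [ι, RingHom.mapMatrix_apply, Matrix.map_apply, Matrix.smul_apply,
          Matrix.one_apply] using this
      have hc0 : c = ((w σ 0 0 : ℤ) : ℂ) := by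
        have := hentry 0 0
        simpa using this.symm
      have hint : w σ = (w σ 0 0) • (1 : Matrix (Fin 3) (Fin 3) ℤ) := by
        ext i j
        have h1 := hentry i j
        rw [hc0] at h1
        have h2 : ((w σ i j : ℤ) : ℂ) =
            (((w σ 0 0) • (1 : Matrix (Fin 3) (Fin 3) ℤ)) i j : ℤ) := by
          rw [h1]
          simp [Matrix.smul_apply, Matrix.one_apply]
        exact_mod_cast h2
      have h1 := wscalar σ hint
      rw [hcoe, h1]
      exact map_one ι
end
end
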